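/- arXiv:2103.09722 — 4 statements merged into one kernel-verified Lean document; each statement's English description precedes it below -/
import Mathlib

section
/- Let q ≥ 2 be odd, let (P, L) be a finite projective plane of order q, let B be a projective bundle, and let ℓ ∈ L be any line. Then the configuration consisting of ℓ together with the q+1 ovals of B tangent to ℓ covers every point of P exactly 0 or exactly 2 times; in particular, every point belongs to an even number of its members, so the binary code with parity-check matrix (A | M) (A the point-line incidence matrix, M the point-oval incidence matrix over F₂) contains a codeword of Hamming weight exactly q+2, and its minimum distance equals q+2. -/
/-- A finite projective plane of order `q`, given by its set of lines (each line a
finite set of points of the ambient point type `P`): any two distinct points lie on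
exactly one common line, any two distinct lines meet in exactly one point, there are
four points no three of which are collinear, and every line has `q + 1` points. -/
structure IsProjectivePlane (q : ℕ) {P : Type} [DecidableEq P] (L : Finset (Finset P)) : Prop where
  exists_unique_line : ∀ p₁ p₂ : P, p₁ ≠ p₂ → ∃! ℓ, ℓ ∈ L ∧ p₁ ∈ ℓ ∧ p₂ ∈ ℓ
  exists_unique_point : ∀ ℓ₁ ∈ L, ∀ ℓ₂ ∈ L, ℓ₁ ≠ ℓ₂ → ∃! p, p ∈ ℓ₁ ∧ p ∈ ℓ₂
  nondeg : ∃ a b c d : P, a ≠ b ∧ a ≠ c ∧ a ≠ d ∧ b ≠ c ∧ b ≠ d ∧ c ≠ d ∧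
      ∀ ℓ ∈ L, (ℓ ∩ ({a, b, c, d} : Finset P)).card ≤ 2
  card_line : ∀ ℓ ∈ L, ℓ.card = q + 1

/-- An oval: a set of `q + 1` points such that every line contains at most two of them. -/
def IsOval (q : ℕ) {P : Type} [DecidableEq P] (L : Finset (Finset P)) (O : Finset P) : Prop :=
  O.card = q + 1 ∧ ∀ ℓ ∈ L, (ℓ ∩ O).card ≤ 2

/-- A projective bundle: a set of `q² + q + 1` ovals, any two of which meet in
exactly one point. -/
def IsProjectiveBundle (q : ℕ) {P : Type} [DecidableEq P] (L : Finset (Finset P))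
    (B : Finset (Finset P)) : Prop :=
  B.card = q ^ 2 + q + 1 ∧ (∀ o ∈ B, IsOval q L o) ∧
    ∀ o₁ ∈ B, ∀ o₂ ∈ B, o₁ ≠ o₂ → (o₁ ∩ o₂).card = 1

set_option linter.unusedSectionVars false
set_option maxHeartbeats 1000000
open Finset


section Aux

variable {P : Type} [Fintype P] [DecidableEq P]

lemma dcount {α β : Type} (s : Finset α) (t : Finset β) (R : α → β → Prop)
    [∀ a b, Decidable (R a b)] :
    ∑ a ∈ s, (t.filter fun b => R a b).card = ∑ b ∈ t, (s.filter fun a => R a b).card := by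
  simp only [Finset.card_filter]
  exact Finset.sum_comm

lemma all_one_of_le_one {α : Type} {s : Finset α} {f : α → ℕ}
    (h1 : ∀ a ∈ s, f a ≤ 1) (h2 : s.card ≤ ∑ a ∈ s, f a) : ∀ a ∈ s, f a = 1 := by
  by_contra hc
  push_neg at hc
  obtain ⟨a0, ha0, hfa0⟩ := hc
  have hlt : ∑ a ∈ s, f a < ∑ a ∈ s, 1 := by
    apply Finset.sum_lt_sum h1
    exact ⟨a0, ha0, by have := h1 a0 ha0; omega⟩
  rw [Finset.sum_const, smul_eq_mul, mul_one] at hlt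
  omega

lemma all_one_of_one_le {α : Type} {s : Finset α} {f : α → ℕ}
    (h1 : ∀ a ∈ s, 1 ≤ f a) (h2 : ∑ a ∈ s, f a ≤ s.card) : ∀ a ∈ s, f a = 1 := by
  by_contra hc
  push_neg at hc
  obtain ⟨a0, ha0, hfa0⟩ := hc
  have hlt : ∑ a ∈ s, 1 < ∑ a ∈ s, f a := by
    apply Finset.sum_lt_sum h1
    exact ⟨a0, ha0, by have := h1 a0 ha0; omega⟩
  rw [Finset.sum_const, smul_eq_mul, mul_one] at hlt
  omega

lemma zmod2_cast_card {n : ℕ} (h : n ≤ 2) :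
    ((n : ZMod 2)) = if n = 1 then 1 else 0 := by
  interval_cases n <;> decide

lemma zmod2_odd {q : ℕ} (h : Odd q) : ((q : ZMod 2)) = 1 := by
  obtain ⟨k, rfl⟩ := h
  push_cast
  have h2 : (2 : ZMod 2) = 0 := by decide
  rw [h2]
  ring

lemma zmod2_dvd {n : ℕ} (h : (n : ZMod 2) = 0) : 2 ∣ n :=
  (ZMod.natCast_eq_zero_iff n 2).mp h

/-- A "nice family" of (q+1)-subsets of P: behaves like the lines of a projective
plane of order q. -/
structure NiceFamily (q : ℕ) (C : Finset (Finset P)) : Prop where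
  count : ∀ p : P, (C.filter fun c => p ∈ c).card = q + 1
  pair : ∀ x y : P, x ≠ y → (C.filter fun c => x ∈ c ∧ y ∈ c).card = 1
  csize : ∀ c ∈ C, c.card = q + 1
  inter : ∀ c ∈ C, ∀ c' ∈ C, c ≠ c' → (c ∩ c').card = 1

end Aux

section Fam

variable {P : Type} [Fintype P] [DecidableEq P] {q : ℕ} {C : Finset (Finset P)}

lemma NiceFamily.tangent_at (hC : NiceFamily q C) {K : Finset P}
    (hK : K.card = q + 1) (hK2 : ∀ c ∈ C, (c ∩ K).card ≤ 2) {p : P} (hp : p ∈ K) :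
    (C.filter fun c => p ∈ c ∧ (c ∩ K).card = 1).card = 1 := by
  classical
  set Cp := C.filter (fun c => p ∈ c) with hCpdef
  have hCpcard : Cp.card = q + 1 := hC.count p
  have hmem : ∀ c ∈ Cp, p ∈ c ∧ c ∈ C := by
    intro c hc; rw [hCpdef, mem_filter] at hc; exact ⟨hc.2, hc.1⟩
  have hsum : ∑ c ∈ Cp, ((K.erase p).filter fun x => x ∈ c).card = q := by
    rw [dcount]
    have hterm : ∀ x ∈ K.erase p, (Cp.filter fun c => x ∈ c).card = 1 := by
      intro x hx
      rw [mem_erase] at hx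
      have hfe : Cp.filter (fun c => x ∈ c) = C.filter fun c => p ∈ c ∧ x ∈ c := by
        rw [hCpdef, filter_filter]
      rw [hfe, hC.pair p x (Ne.symm hx.1)]
    rw [Finset.sum_congr rfl hterm, Finset.sum_const, smul_eq_mul, mul_one,
      card_erase_of_mem hp, hK]
    omega
  have hterm2 : ∀ c ∈ Cp, ((K.erase p).filter fun x => x ∈ c).card = (c ∩ K).card - 1 := by
    intro c hc
    have h1 : (K.erase p).filter (fun x => x ∈ c) = (c ∩ K).erase p := by
      ext z
      simp only [mem_filter, mem_erase, mem_inter]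
      tauto
    rw [h1, card_erase_of_mem (by rw [mem_inter]; exact ⟨(hmem c hc).1, hp⟩)]
  rw [Finset.sum_congr rfl hterm2] at hsum
  have hsplit : (Cp.filter fun c => (c ∩ K).card = 1).card
      + (Cp.filter fun c => ¬ ((c ∩ K).card = 1)).card = q + 1 := by
    rw [Finset.card_filter_add_card_filter_not, hCpcard]
  have h3 : ∑ c ∈ Cp, ((c ∩ K).card - 1) = (Cp.filter fun c => ¬((c ∩ K).card = 1)).card := by
    rw [Finset.card_filter]
    apply Finset.sum_congr rfl
    intro c hc
    have hub := hK2 c (hmem c hc).2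
    have hlb : 0 < (c ∩ K).card :=
      card_pos.mpr ⟨p, by rw [mem_inter]; exact ⟨(hmem c hc).1, hp⟩⟩
    have : (c ∩ K).card = 1 ∨ (c ∩ K).card = 2 := by omega
    rcases this with h | h <;> simp [h]
  rw [h3] at hsum
  have hgoal : (Cp.filter fun c => (c ∩ K).card = 1).card = 1 := by omega
  have : C.filter (fun c => p ∈ c ∧ (c ∩ K).card = 1)
      = Cp.filter fun c => (c ∩ K).card = 1 := by
    rw [hCpdef, filter_filter]
  rw [this, hgoal]

lemma NiceFamily.tangent_count (hC : NiceFamily q C) {K : Finset P}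
    (hK : K.card = q + 1) (hK2 : ∀ c ∈ C, (c ∩ K).card ≤ 2) :
    (C.filter fun c => (c ∩ K).card = 1).card = q + 1 := by
  classical
  set T := C.filter (fun c => (c ∩ K).card = 1) with hTdef
  have h1 : ∀ c ∈ T, (K.filter fun x => x ∈ c).card = 1 := by
    intro c hc; rw [hTdef, mem_filter] at hc
    have : K.filter (fun x => x ∈ c) = c ∩ K := by
      ext z; simp only [mem_filter, mem_inter]; tauto
    rw [this]; exact hc.2
  have h2 : ∀ x ∈ K, (T.filter fun c => x ∈ c).card = 1 := by
    intro x hx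
    have : T.filter (fun c => x ∈ c) = C.filter fun c => x ∈ c ∧ (c ∩ K).card = 1 := by
      rw [hTdef, filter_filter]
      exact filter_congr fun c _ => by tauto
    rw [this, hC.tangent_at hK hK2 hx]
  have hd := dcount T K (fun c x => x ∈ c)
  rw [Finset.sum_congr rfl h1, Finset.sum_congr rfl h2, Finset.sum_const, Finset.sum_const,
    smul_eq_mul, mul_one, smul_eq_mul, mul_one, hK] at hd
  exact hd

lemma NiceFamily.off_tangent (hC : NiceFamily q C) {K : Finset P}
    (hK : K.card = q + 1) (hK2 : ∀ c ∈ C, (c ∩ K).card ≤ 2) (hodd : Odd q) {p : P}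
    (hp : p ∉ K) :
    (C.filter fun c => p ∈ c ∧ (c ∩ K).card = 1).card = 0 ∨
    (C.filter fun c => p ∈ c ∧ (c ∩ K).card = 1).card = 2 := by
  classical
  set T := C.filter (fun c => (c ∩ K).card = 1) with hTdef
  have hTsub : T ⊆ C := filter_subset _ _
  have hTcard : T.card = q + 1 := hC.tangent_count hK hK2
  set t : P → ℕ := fun z => (T.filter fun c => z ∈ c).card with htdef
  -- parity: for z ∉ K, t z is even
  have hpar : ∀ z ∉ K, 2 ∣ t z := by
    intro z hz
    apply zmod2_dvd
    have h1 : t z = ((C.filter fun c => z ∈ c).filter fun c => (c ∩ K).card = 1).card := by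
      simp only [htdef, hTdef, filter_filter]
      congr 1
      exact filter_congr fun c _ => by tauto
    have h2 : ((t z : ZMod 2))
        = ∑ c ∈ C.filter (fun c => z ∈ c), (((c ∩ K).card : ZMod 2)) := by
      rw [h1, Finset.card_filter, Nat.cast_sum]
      apply Finset.sum_congr rfl
      intro c hc
      rw [mem_filter] at hc
      rw [zmod2_cast_card (hK2 c hc.1)]
      by_cases h : (c ∩ K).card = 1 <;> simp [h]
    have h3 : ∑ c ∈ C.filter (fun c => z ∈ c), (c ∩ K).card = q + 1 := by
      have hre : ∀ c ∈ C.filter (fun c => z ∈ c), (c ∩ K).card = (K.filter fun x => x ∈ c).card := by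
        intro c _
        congr 1
        ext x; simp only [mem_filter, mem_inter]; tauto
      rw [Finset.sum_congr rfl hre, dcount]
      have hone : ∀ x ∈ K, ((C.filter fun c => z ∈ c).filter fun c => x ∈ c).card = 1 := by
        intro x hx
        rw [filter_filter]
        exact hC.pair z x (fun h => hz (h ▸ hx))
      rw [Finset.sum_congr rfl hone, Finset.sum_const, smul_eq_mul, mul_one, hK]
    have h4 : ((t z : ZMod 2)) = ((q + 1 : ℕ) : ZMod 2) := by
      rw [h2, ← Nat.cast_sum, h3]
    rw [h4]
    push_cast
    rw [zmod2_odd hodd]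
    decide
  -- first moment
  have hm1 : ∑ z ∈ univ \ K, t z = (q + 1) * q := by
    have hd := dcount T (univ \ K) (fun c z => z ∈ c)
    have hterm : ∀ c ∈ T, ((univ \ K).filter fun z => z ∈ c).card = q := by
      intro c hc
      rw [hTdef, mem_filter] at hc
      have he : (univ \ K).filter (fun z => z ∈ c) = c \ K := by
        ext z; simp only [mem_filter, mem_sdiff, mem_univ, true_and]; tauto
      rw [he]
      have := card_inter_add_card_sdiff c K
      rw [hc.2, hC.csize c hc.1] at this
      omega
    rw [Finset.sum_congr rfl hterm, Finset.sum_const, smul_eq_mul, hTcard] at hd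
    exact hd.symm
  -- second moment
  have hm2 : ∑ z ∈ univ \ K, t z * t z = 2 * ((q + 1) * q) := by
    have hexp : ∀ z, t z * t z
        = ∑ c ∈ T, ∑ c' ∈ T, if z ∈ c ∧ z ∈ c' then 1 else 0 := by
      intro z
      rw [htdef]
      simp only [Finset.card_filter]
      rw [Finset.sum_mul_sum]
      refine Finset.sum_congr rfl fun c _ => Finset.sum_congr rfl fun c' _ => ?_
      by_cases h1 : z ∈ c <;> by_cases h2 : z ∈ c' <;> simp [h1, h2]
    calc ∑ z ∈ univ \ K, t z * t z
        = ∑ c ∈ T, ∑ c' ∈ T, ((univ \ K).filter fun z => z ∈ c ∧ z ∈ c').card := by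
          rw [Finset.sum_congr rfl fun z _ => hexp z]
          rw [Finset.sum_comm]
          refine Finset.sum_congr rfl fun c _ => ?_
          rw [Finset.sum_comm]
          refine Finset.sum_congr rfl fun c' _ => ?_
          rw [Finset.card_filter]
      _ = ∑ c ∈ T, (2 * q) := by
          refine Finset.sum_congr rfl fun c hc => ?_
          have hcC : c ∈ C := hTsub hc
          have hc1 : (c ∩ K).card = 1 := (mem_filter.mp hc).2
          rw [← Finset.sum_erase_add _ _ hc]
          have hdiag : ((univ \ K).filter fun z => z ∈ c ∧ z ∈ c).card = q := by
            have he : (univ \ K).filter (fun z => z ∈ c ∧ z ∈ c) = c \ K := by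
              ext z; simp only [mem_filter, mem_sdiff, mem_univ, true_and]; tauto
            rw [he]
            have := card_inter_add_card_sdiff c K
            rw [hc1, hC.csize c hcC] at this
            omega
          have hoff : ∀ c' ∈ T.erase c,
              ((univ \ K).filter fun z => z ∈ c ∧ z ∈ c').card = 1 := by
            intro c' hc'
            rw [mem_erase] at hc'
            have hc'T := hc'.2
            have hc'C : c' ∈ C := hTsub hc'T
            have hcc' : (c ∩ c').card = 1 := hC.inter c hcC c' hc'C (Ne.symm hc'.1)
            have hno : ∀ z ∈ K, ¬ (z ∈ c ∧ z ∈ c') := by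
              intro z hzK hzc
              have h1 : c ∈ C.filter fun d => z ∈ d ∧ (d ∩ K).card = 1 := by
                rw [mem_filter]; exact ⟨hcC, hzc.1, hc1⟩
              have h2 : c' ∈ C.filter fun d => z ∈ d ∧ (d ∩ K).card = 1 := by
                rw [mem_filter]; exact ⟨hc'C, hzc.2, (mem_filter.mp hc'T).2⟩
              have := Finset.one_lt_card.mpr ⟨c, h1, c', h2, hc'.1.symm⟩
              rw [hC.tangent_at hK hK2 hzK] at this
              omega
            have he : (univ \ K).filter (fun z => z ∈ c ∧ z ∈ c') = c ∩ c' := by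
              ext z
              simp only [mem_filter, mem_sdiff, mem_univ, true_and, mem_inter]
              constructor
              · tauto
              · intro hz
                exact ⟨fun hzK => hno z hzK ⟨hz.1, hz.2⟩, hz.1, hz.2⟩
            rw [he, hcc']
          rw [Finset.sum_congr rfl hoff, Finset.sum_const, smul_eq_mul, mul_one,
            card_erase_of_mem hc, hTcard, hdiag]
          omega
      _ = 2 * ((q + 1) * q) := by
          rw [Finset.sum_const, smul_eq_mul, hTcard]; ring
  -- conclude pointwise
  have hgoal : ∀ z ∈ univ \ K, t z = 0 ∨ t z = 2 := by
    have hzsum : ∑ z ∈ univ \ K, ((t z : ℤ) * (t z) - 2 * (t z)) = 0 := by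
      have heq : ∑ z ∈ univ \ K, ((t z : ℤ) * (t z) - 2 * (t z))
          = ((∑ z ∈ univ \ K, t z * t z : ℕ) : ℤ) - 2 * ((∑ z ∈ univ \ K, t z : ℕ) : ℤ) := by
        rw [Finset.sum_sub_distrib]
        push_cast
        rw [Finset.mul_sum]
      rw [heq, hm1, hm2]
      push_cast
      ring
    have hnn : ∀ z ∈ univ \ K, (0 : ℤ) ≤ (t z : ℤ) * (t z) - 2 * (t z) := by
      intro z hz
      rw [mem_sdiff] at hz
      obtain ⟨k, hk⟩ := hpar z hz.2
      rw [hk]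
      push_cast
      rcases Nat.eq_zero_or_pos k with h | h
      · simp [h]
      · have hk1 : (1 : ℤ) ≤ (k : ℤ) := by exact_mod_cast h
        nlinarith
    have := (Finset.sum_eq_zero_iff_of_nonneg hnn).mp hzsum
    intro z hz
    have h0 := this z hz
    rw [mem_sdiff] at hz
    obtain ⟨k, hk⟩ := hpar z hz.2
    rw [hk] at h0 ⊢
    have : (k : ℤ) * (k - 1) = 0 := by push_cast at h0 ⊢; nlinarith
    have : k = 0 ∨ k = 1 := by
      rcases mul_eq_zero.mp this with h | h
      · left; exact_mod_cast h
      · right; have : (k : ℤ) = 1 := by linarith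
        exact_mod_cast this
    omega
  have hfe : C.filter (fun c => p ∈ c ∧ (c ∩ K).card = 1) = T.filter fun c => p ∈ c := by
    rw [hTdef, filter_filter]
    exact filter_congr fun c _ => by tauto
  rw [hfe]
  exact hgoal p (by rw [mem_sdiff]; exact ⟨mem_univ p, hp⟩)

variable {L B : Finset (Finset P)}

lemma IsProjectivePlane.line_inter (hL : IsProjectivePlane q L) {m m' : Finset P}
    (hm : m ∈ L) (hm' : m' ∈ L) (hne : m ≠ m') : (m ∩ m').card = 1 := by
  obtain ⟨p, hp, hu⟩ := hL.exists_unique_point m hm m' hm' hne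
  rw [Finset.card_eq_one]
  refine ⟨p, ?_⟩
  ext z
  simp only [mem_inter, Finset.mem_singleton]
  constructor
  · intro hz; exact hu z hz
  · rintro rfl; exact hp

lemma IsProjectivePlane.pair_card (hL : IsProjectivePlane q L) {x y : P} (hne : x ≠ y) :
    (L.filter fun m => x ∈ m ∧ y ∈ m).card = 1 := by
  obtain ⟨m, ⟨hmL, hmx, hmy⟩, hu⟩ := hL.exists_unique_line x y hne
  rw [Finset.card_eq_one]
  refine ⟨m, ?_⟩
  ext c
  simp only [mem_filter, Finset.mem_singleton]
  constructor
  · rintro ⟨h1, h2, h3⟩; exact hu c ⟨h1, h2, h3⟩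
  · rintro rfl; exact ⟨hmL, hmx, hmy⟩

lemma IsProjectivePlane.exists_line_not_mem (hL : IsProjectivePlane q L) (p : P) :
    ∃ m ∈ L, p ∉ m := by
  obtain ⟨a, b, c, d, hab, hac, had, hbc, hbd, hcd, hquad⟩ := hL.nondeg
  have hcard3 : ∀ (x y z : P) (m : Finset P), m ∈ L → x ∈ m → y ∈ m → z ∈ m →
      x ≠ y → x ≠ z → y ≠ z → x ∈ ({a,b,c,d} : Finset P) → y ∈ ({a,b,c,d} : Finset P) →
      z ∈ ({a,b,c,d} : Finset P) → False := by
    intro x y z m hmL hx hy hz hxy hxz hyz hxq hyq hzq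
    have hsub : ({x, y, z} : Finset P) ⊆ m ∩ ({a,b,c,d} : Finset P) := by
      intro w hw
      simp only [Finset.mem_insert, Finset.mem_singleton] at hw
      rw [mem_inter]
      rcases hw with rfl | rfl | rfl
      · exact ⟨hx, hxq⟩
      · exact ⟨hy, hyq⟩
      · exact ⟨hz, hzq⟩
    have h3 : ({x, y, z} : Finset P).card = 3 := by
      rw [Finset.card_insert_of_notMem (by simp [hxy, hxz]),
        Finset.card_insert_of_notMem (by simp [hyz]), Finset.card_singleton]
    have := Finset.card_le_card hsub
    have := hquad m hmL
    omega
  obtain ⟨mab, ⟨habL, haab, hbab⟩, _⟩ := hL.exists_unique_line a b hab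
  obtain ⟨mcd, ⟨hcdL, hccd, hdcd⟩, _⟩ := hL.exists_unique_line c d hcd
  obtain ⟨mac, ⟨hacL, haac, hcac⟩, _⟩ := hL.exists_unique_line a c hac
  by_cases h1 : p ∈ mab
  · by_cases h2 : p ∈ mcd
    · refine ⟨mac, hacL, fun h3 => ?_⟩
      have hne : mab ≠ mac := by
        intro he
        exact hcard3 a b c mab habL haab hbab (he ▸ hcac) hab hac hbc (by simp) (by simp) (by simp)
      obtain ⟨z, hz, hzu⟩ := hL.exists_unique_point mab habL mac hacL hne
      have hpz : p = z := hzu p ⟨h1, h3⟩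
      have haz : a = z := hzu a ⟨haab, haac⟩
      have hpa : p = a := hpz.trans haz.symm
      exact hcard3 a c d mcd hcdL (hpa ▸ h2) hccd hdcd hac had hcd (by simp) (by simp) (by simp)
    · exact ⟨mcd, hcdL, h2⟩
  · exact ⟨mab, habL, h1⟩

lemma IsProjectivePlane.point_count (hL : IsProjectivePlane q L) (p : P) :
    (L.filter fun m => p ∈ m).card = q + 1 := by
  classical
  obtain ⟨m0, hm0L, hpm0⟩ := hL.exists_line_not_mem p
  have hchoice : ∀ m ∈ L.filter (fun m => p ∈ m), ∃ z, z ∈ m ∩ m0 := by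
    intro m hm
    rw [mem_filter] at hm
    have hne : m ≠ m0 := fun h => hpm0 (h ▸ hm.2)
    have h1 : (m ∩ m0).card = 1 := hL.line_inter hm.1 hm0L hne
    exact Finset.card_pos.mp (by omega)
  have hbij : (L.filter fun m => p ∈ m).card = m0.card := by
    refine Finset.card_bij (fun m hm => (hchoice m hm).choose) ?_ ?_ ?_
    · intro m hm
      have := (hchoice m hm).choose_spec
      rw [mem_inter] at this
      exact this.2
    · intro m1 hm1 m2 hm2 heq
      have h1 := (hchoice m1 hm1).choose_spec
      have h2 := (hchoice m2 hm2).choose_spec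
      rw [mem_inter] at h1 h2
      have hm1' := mem_filter.mp hm1
      have hm2' := mem_filter.mp hm2
      have hzp : p ≠ (hchoice m1 hm1).choose := fun h => hpm0 (h ▸ h1.2)
      obtain ⟨m', _, hu⟩ := hL.exists_unique_line p _ hzp
      have e1 : m1 = m' := hu m1 ⟨hm1'.1, hm1'.2, h1.1⟩
      have heq' : (hchoice m1 hm1).choose = (hchoice m2 hm2).choose := heq
      have e2 : m2 = m' := hu m2 ⟨hm2'.1, hm2'.2, heq' ▸ h2.1⟩
      exact e1.trans e2.symm
    · intro z hz
      have hzp : p ≠ z := fun h => hpm0 (h ▸ hz)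
      obtain ⟨m, ⟨hmL, hpm, hzm⟩, hu⟩ := hL.exists_unique_line p z hzp
      have hmf : m ∈ L.filter (fun m => p ∈ m) := mem_filter.mpr ⟨hmL, hpm⟩
      refine ⟨m, hmf, ?_⟩
      have h1 := (hchoice m hmf).choose_spec
      have hc : (m ∩ m0).card = 1 := hL.line_inter hmL hm0L (fun h => hpm0 (h ▸ hpm))
      by_contra hne'
      have : 1 < (m ∩ m0).card :=
        Finset.one_lt_card.mpr ⟨_, h1, z, mem_inter.mpr ⟨hzm, hz⟩, hne'⟩
      omega
  rw [hbij, hL.card_line m0 hm0L]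

lemma IsProjectivePlane.card_points (hL : IsProjectivePlane q L) :
    Fintype.card P = q ^ 2 + q + 1 := by
  classical
  obtain ⟨a, b, c, d, hab, -, -, -, -, -, -⟩ := hL.nondeg
  have hcover : (univ : Finset P)
      = insert a ((L.filter fun m => a ∈ m).biUnion fun m => m.erase a) := by
    ext z
    simp only [mem_univ, true_iff, mem_insert, mem_biUnion, mem_filter, mem_erase]
    by_cases hz : z = a
    · left; exact hz
    · right
      obtain ⟨m, ⟨hmL, ham, hzm⟩, -⟩ := hL.exists_unique_line a z (fun h => hz h.symm)
      exact ⟨m, ⟨hmL, ham⟩, hz, hzm⟩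
  have hdisj : ∀ m1 ∈ L.filter (fun m => a ∈ m), ∀ m2 ∈ L.filter (fun m => a ∈ m),
      m1 ≠ m2 → Disjoint (m1.erase a) (m2.erase a) := by
    intro m1 h1 m2 h2 hne
    rw [mem_filter] at h1 h2
    rw [Finset.disjoint_left]
    intro z hz1 hz2
    rw [mem_erase] at hz1 hz2
    obtain ⟨m', -, hu⟩ := hL.exists_unique_line a z (fun h => hz1.1 h.symm)
    exact hne ((hu m1 ⟨h1.1, h1.2, hz1.2⟩).trans (hu m2 ⟨h2.1, h2.2, hz2.2⟩).symm)
  have hnotmem : a ∉ (L.filter fun m => a ∈ m).biUnion fun m => m.erase a := by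
    simp only [mem_biUnion, mem_erase, not_exists]
    rintro m ⟨-, h, -⟩
    exact h rfl
  rw [← Finset.card_univ, hcover, Finset.card_insert_of_notMem hnotmem,
    Finset.card_biUnion hdisj]
  have hterm : ∀ m ∈ L.filter (fun m => a ∈ m), (m.erase a).card = q := by
    intro m hm
    rw [mem_filter] at hm
    rw [card_erase_of_mem hm.2, hL.card_line m hm.1]
    omega
  rw [Finset.sum_congr rfl hterm, Finset.sum_const, smul_eq_mul, hL.point_count a]
  ring

lemma IsProjectivePlane.card_lines (hL : IsProjectivePlane q L) :
    L.card = q ^ 2 + q + 1 := by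
  classical
  have hd := dcount L (univ : Finset P) (fun m p => p ∈ m)
  have h1 : ∀ m ∈ L, ((univ : Finset P).filter fun p => p ∈ m).card = q + 1 := by
    intro m hm
    have : (univ : Finset P).filter (fun p => p ∈ m) = m := by
      ext z; simp
    rw [this]
    exact hL.card_line m hm
  have h2 : ∀ p ∈ (univ : Finset P), (L.filter fun m => p ∈ m).card = q + 1 :=
    fun p _ => hL.point_count p
  rw [Finset.sum_congr rfl h1, Finset.sum_congr rfl h2, Finset.sum_const, Finset.sum_const,
    smul_eq_mul, smul_eq_mul, card_univ, hL.card_points] at hd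
  have hq1 : 0 < q + 1 := Nat.succ_pos q
  exact Nat.eq_of_mul_eq_mul_right hq1 hd

lemma IsProjectivePlane.nice (hL : IsProjectivePlane q L) : NiceFamily q L :=
  ⟨hL.point_count, fun x y h => hL.pair_card h, hL.card_line, fun c hc c' hc' h => hL.line_inter hc hc' h⟩

lemma bundle_count (hL : IsProjectivePlane q L) (hB : IsProjectiveBundle q L B) (p : P) :
    (B.filter fun o => p ∈ o).card = q + 1 := by
  classical
  set r : P → ℕ := fun z => (B.filter fun o => z ∈ o).card with hrdef
  have hcardP : Fintype.card P = q ^ 2 + q + 1 := hL.card_points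
  have h1 : ∑ z : P, r z = (q ^ 2 + q + 1) * (q + 1) := by
    have hd := dcount B (univ : Finset P) (fun o z => z ∈ o)
    have hterm : ∀ o ∈ B, ((univ : Finset P).filter fun z => z ∈ o).card = q + 1 := by
      intro o ho
      have he : (univ : Finset P).filter (fun z => z ∈ o) = o := by ext z; simp
      rw [he, (hB.2.1 o ho).1]
    rw [Finset.sum_congr rfl hterm, Finset.sum_const, smul_eq_mul, hB.1] at hd
    exact hd.symm
  have h2 : ∑ z : P, r z * r z = (q ^ 2 + q + 1) * ((q ^ 2 + q + 1) + q) := by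
    have hexp : ∀ z : P, r z * r z
        = ∑ o ∈ B, ∑ o' ∈ B, if z ∈ o ∧ z ∈ o' then 1 else 0 := by
      intro z
      rw [hrdef]
      simp only [Finset.card_filter]
      rw [Finset.sum_mul_sum]
      refine Finset.sum_congr rfl fun o _ => Finset.sum_congr rfl fun o' _ => ?_
      by_cases h1 : z ∈ o <;> by_cases h2 : z ∈ o' <;> simp [h1, h2]
    calc ∑ z : P, r z * r z
        = ∑ o ∈ B, ∑ o' ∈ B, ((univ : Finset P).filter fun z => z ∈ o ∧ z ∈ o').card := by
          rw [Finset.sum_congr rfl fun z _ => hexp z, Finset.sum_comm]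
          refine Finset.sum_congr rfl fun o _ => ?_
          rw [Finset.sum_comm]
          exact Finset.sum_congr rfl fun o' _ => (Finset.card_filter _ _).symm
      _ = ∑ o ∈ B, ((q ^ 2 + q + 1) + q) := by
          refine Finset.sum_congr rfl fun o ho => ?_
          rw [← Finset.sum_erase_add _ _ ho]
          have hdiag : ((univ : Finset P).filter fun z => z ∈ o ∧ z ∈ o).card = q + 1 := by
            have he : (univ : Finset P).filter (fun z => z ∈ o ∧ z ∈ o) = o := by
              ext z; simp
            rw [he, (hB.2.1 o ho).1]
          have hoff : ∀ o' ∈ B.erase o,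
              ((univ : Finset P).filter fun z => z ∈ o ∧ z ∈ o').card = 1 := by
            intro o' ho'
            rw [mem_erase] at ho'
            have he : (univ : Finset P).filter (fun z => z ∈ o ∧ z ∈ o') = o ∩ o' := by
              ext z; simp [mem_inter]
            rw [he, hB.2.2 o ho o' ho'.2 (fun h => ho'.1 h.symm)]
          rw [Finset.sum_congr rfl hoff, Finset.sum_const, smul_eq_mul, mul_one,
            card_erase_of_mem ho, hB.1, hdiag]
          omega
      _ = (q ^ 2 + q + 1) * ((q ^ 2 + q + 1) + q) := by
          rw [Finset.sum_const, smul_eq_mul, hB.1]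
  have h3 : ∑ z : P, ((r z : ℤ) - (q + 1)) ^ 2 = 0 := by
    have hstep : ∑ z : P, ((r z : ℤ) - (q + 1)) ^ 2
        = ((∑ z : P, r z * r z : ℕ) : ℤ) - 2 * (q + 1) * ((∑ z : P, r z : ℕ) : ℤ)
          + (Fintype.card P : ℤ) * ((q : ℤ) + 1) ^ 2 := by
      rw [Nat.cast_sum, Nat.cast_sum, Finset.mul_sum, ← Finset.sum_sub_distrib]
      have : (Fintype.card P : ℤ) * ((q : ℤ) + 1) ^ 2
          = ∑ _z : P, ((q : ℤ) + 1) ^ 2 := by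
        rw [Finset.sum_const, card_univ, nsmul_eq_mul]
      rw [this, ← Finset.sum_add_distrib]
      refine Finset.sum_congr rfl fun z _ => ?_
      push_cast
      ring
    rw [hstep, h1, h2, hcardP]
    push_cast
    ring
  have hz := (Finset.sum_eq_zero_iff_of_nonneg (fun z _ => sq_nonneg _)).mp h3
  have hzp := hz p (mem_univ p)
  have : ((r p : ℤ) - (q + 1)) = 0 := by
    exact pow_eq_zero_iff (two_ne_zero) |>.mp hzp
  have : (r p : ℤ) = (q : ℤ) + 1 := by linarith
  exact_mod_cast this

lemma bundle_pair (hL : IsProjectivePlane q L) (hB : IsProjectiveBundle q L B)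
    {x y : P} (hxy : x ≠ y) : (B.filter fun o => x ∈ o ∧ y ∈ o).card = 1 := by
  classical
  have hle : ∀ y' ∈ (univ : Finset P).erase x, (B.filter fun o => x ∈ o ∧ y' ∈ o).card ≤ 1 := by
    intro y' hy'
    rw [mem_erase] at hy'
    rw [Finset.card_le_one]
    intro o1 h1 o2 h2
    rw [mem_filter] at h1 h2
    by_contra hne
    have hint : (o1 ∩ o2).card = 1 := hB.2.2 o1 h1.1 o2 h2.1 hne
    have : 1 < (o1 ∩ o2).card :=
      Finset.one_lt_card.mpr ⟨x, mem_inter.mpr ⟨h1.2.1, h2.2.1⟩, y',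
        mem_inter.mpr ⟨h1.2.2, h2.2.2⟩, fun h => hy'.1 h.symm⟩
    omega
  have hsum : ∑ y' ∈ (univ : Finset P).erase x, (B.filter fun o => x ∈ o ∧ y' ∈ o).card
      = ((univ : Finset P).erase x).card := by
    have hre : ∀ y' ∈ (univ : Finset P).erase x,
        (B.filter fun o => x ∈ o ∧ y' ∈ o).card
          = ((B.filter fun o => x ∈ o).filter (fun o => y' ∈ o)).card := by
      intro y' _; rw [filter_filter]
    rw [Finset.sum_congr rfl hre,
      ← dcount (B.filter fun o => x ∈ o) ((univ : Finset P).erase x) (fun o z => z ∈ o)]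
    have hterm : ∀ o ∈ B.filter (fun o => x ∈ o),
        (((univ : Finset P).erase x).filter fun z => z ∈ o).card = q := by
      intro o ho
      rw [mem_filter] at ho
      have he : ((univ : Finset P).erase x).filter (fun z => z ∈ o) = o.erase x := by
        ext z; simp only [mem_filter, mem_erase, mem_univ, true_and, and_true, and_comm]
      rw [he, card_erase_of_mem ho.2, (hB.2.1 o ho.1).1]
      omega
    rw [Finset.sum_congr rfl hterm, Finset.sum_const, smul_eq_mul,
      bundle_count hL hB x, card_erase_of_mem (mem_univ x), card_univ, hL.card_points]
    have : (q + 1) * q = q ^ 2 + q := by ring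
    omega
  exact all_one_of_le_one hle hsum.ge y (mem_erase.mpr ⟨hxy.symm, mem_univ y⟩)

lemma bundle_nice (hL : IsProjectivePlane q L) (hB : IsProjectiveBundle q L B) :
    NiceFamily q B :=
  ⟨bundle_count hL hB, fun _ _ h => bundle_pair hL hB h, fun o ho => (hB.2.1 o ho).1, hB.2.2⟩

lemma zmod2_even {n : ℕ} (h : Even n) : ((n : ZMod 2)) = 0 := by
  obtain ⟨k, rfl⟩ := h
  have h1 : ((k + k : ℕ) : ZMod 2) = 2 * (k : ZMod 2) := by push_cast; ring
  rw [h1, show (2 : ZMod 2) = 0 by decide, zero_mul]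

lemma common_tangent_odd (hL : IsProjectivePlane q L) (hB : IsProjectiveBundle q L B)
    (hodd : Odd q) {o o' : Finset P} (ho : o ∈ B) (ho' : o' ∈ B) (hne : o ≠ o') :
    (((L.filter fun m => (m ∩ o).card = 1 ∧ (m ∩ o').card = 1).card : ℕ) : ZMod 2) = 1 := by
  classical
  have key : ∑ m ∈ L, (m ∩ o).card * (m ∩ o').card = (q + 1) * (q + 1) + q := by
    have hsw : ∑ m ∈ L, (m ∩ o).card * (m ∩ o').card
        = ∑ x ∈ o, ∑ y ∈ o', (L.filter fun m => x ∈ m ∧ y ∈ m).card := by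
      have hterm : ∀ m ∈ L, (m ∩ o).card * (m ∩ o').card
          = ∑ x ∈ o, ∑ y ∈ o', if x ∈ m ∧ y ∈ m then 1 else 0 := by
        intro m _
        have e1 : (m ∩ o).card = ∑ x ∈ o, if x ∈ m then 1 else 0 := by
          rw [← Finset.card_filter]
          congr 1
          ext z; simp [mem_inter, and_comm]
        have e2 : (m ∩ o').card = ∑ y ∈ o', if y ∈ m then 1 else 0 := by
          rw [← Finset.card_filter]
          congr 1
          ext z; simp [mem_inter, and_comm]
        rw [e1, e2, Finset.sum_mul_sum]
        refine Finset.sum_congr rfl fun x _ => Finset.sum_congr rfl fun y _ => ?_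
        by_cases h1 : x ∈ m <;> by_cases h2 : y ∈ m <;> simp [h1, h2]
      rw [Finset.sum_congr rfl hterm, Finset.sum_comm]
      refine Finset.sum_congr rfl fun x _ => ?_
      rw [Finset.sum_comm]
      exact Finset.sum_congr rfl fun y _ => (Finset.card_filter _ _).symm
    rw [hsw]
    have hinner : ∀ x ∈ o, ∑ y ∈ o', (L.filter fun m => x ∈ m ∧ y ∈ m).card
        = (q + 1) + (if x ∈ o' then q else 0) := by
      intro x _
      by_cases hxo' : x ∈ o'
      · rw [← Finset.sum_erase_add _ _ hxo']
        have h1 : ∀ y ∈ o'.erase x, (L.filter fun m => x ∈ m ∧ y ∈ m).card = 1 := by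
          intro y hy
          exact hL.pair_card (fun h => (mem_erase.mp hy).1 h.symm)
        have h2 : (L.filter fun m => x ∈ m ∧ x ∈ m).card = q + 1 := by
          have he : (L.filter fun m => x ∈ m ∧ x ∈ m) = L.filter fun m => x ∈ m := by
            apply filter_congr; intro m _; simp
          rw [he]; exact hL.point_count x
        rw [Finset.sum_congr rfl h1, Finset.sum_const, smul_eq_mul, mul_one,
          card_erase_of_mem hxo', (hB.2.1 o' ho').1, h2, if_pos hxo']
        omega
      · have h1 : ∀ y ∈ o', (L.filter fun m => x ∈ m ∧ y ∈ m).card = 1 := by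
          intro y hy
          exact hL.pair_card (fun h => hxo' (h ▸ hy))
        rw [Finset.sum_congr rfl h1, Finset.sum_const, smul_eq_mul, mul_one,
          (hB.2.1 o' ho').1, if_neg hxo']
    rw [Finset.sum_congr rfl hinner, Finset.sum_add_distrib, Finset.sum_const, smul_eq_mul,
      (hB.2.1 o ho).1]
    have hlast : ∑ x ∈ o, (if x ∈ o' then q else 0) = q := by
      rw [Finset.sum_ite, Finset.sum_const, Finset.sum_const, smul_eq_mul, smul_eq_mul,
        mul_zero, add_zero]
      have he : o.filter (fun x => x ∈ o') = o ∩ o' := by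
        ext z; simp [mem_inter]
      rw [he, hB.2.2 o ho o' ho' hne, one_mul]
    rw [hlast]
  have hcast : ((L.filter fun m => (m ∩ o).card = 1 ∧ (m ∩ o').card = 1).card : ZMod 2)
      = ((∑ m ∈ L, (m ∩ o).card * (m ∩ o').card : ℕ) : ZMod 2) := by
    rw [Finset.card_filter, Nat.cast_sum, Nat.cast_sum]
    refine Finset.sum_congr rfl fun m hm => ?_
    have b1 := (hB.2.1 o ho).2 m hm
    have b2 := (hB.2.1 o' ho').2 m hm
    rw [Nat.cast_mul, zmod2_cast_card b1, zmod2_cast_card b2]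
    by_cases h1 : (m ∩ o).card = 1 <;> by_cases h2 : (m ∩ o').card = 1 <;> simp [h1, h2]
  rw [hcast, key]
  push_cast
  rw [zmod2_odd hodd]
  decide

lemma common_tangent_card (hL : IsProjectivePlane q L) (hB : IsProjectiveBundle q L B)
    (hodd : Odd q) {o o' : Finset P} (ho : o ∈ B) (ho' : o' ∈ B) (hne : o ≠ o') :
    (L.filter fun m => (m ∩ o).card = 1 ∧ (m ∩ o').card = 1).card = 1 := by
  classical
  have hcrossL : ∀ m ∈ L, (m ∩ o).card ≤ 2 := fun m hm => (hB.2.1 o ho).2 m hm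
  have hocard : o.card = q + 1 := (hB.2.1 o ho).1
  set t0 := L.filter (fun m => (m ∩ o).card = 1) with ht0def
  have ht0card : t0.card = q + 1 := hL.nice.tangent_count hocard hcrossL
  have ht0sub : t0 ⊆ L := filter_subset _ _
  have hone_le : ∀ o'' ∈ B.erase o, 1 ≤ (t0.filter fun m => (m ∩ o'').card = 1).card := by
    intro o'' ho''
    rw [mem_erase] at ho''
    have hodd1 := common_tangent_odd hL hB hodd ho ho''.2 (fun h => ho''.1 h.symm)
    have he : t0.filter (fun m => (m ∩ o'').card = 1)
        = L.filter fun m => (m ∩ o).card = 1 ∧ (m ∩ o'').card = 1 := by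
      rw [ht0def, filter_filter]
    rw [← he] at hodd1
    by_contra hc
    push_neg at hc
    have hzero : (t0.filter fun m => (m ∩ o'').card = 1).card = 0 := by omega
    rw [hzero] at hodd1
    exact absurd hodd1 (by decide)
  have hsum : ∑ o'' ∈ B.erase o, (t0.filter fun m => (m ∩ o'').card = 1).card
      = (B.erase o).card := by
    rw [← dcount t0 (B.erase o) (fun m o'' => (m ∩ o'').card = 1)]
    have hterm : ∀ m ∈ t0, ((B.erase o).filter fun o'' => (m ∩ o'').card = 1).card = q := by
      intro m hm
      have hmL : m ∈ L := ht0sub hm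
      have hmtan : (m ∩ o).card = 1 := (mem_filter.mp hm).2
      have hmcard : m.card = q + 1 := hL.card_line m hmL
      have hcrossB : ∀ c ∈ B, (c ∩ m).card ≤ 2 := by
        intro c hc
        rw [Finset.inter_comm]
        exact (hB.2.1 c hc).2 m hmL
      have hBm : (B.filter fun c => (c ∩ m).card = 1).card = q + 1 :=
        (bundle_nice hL hB).tangent_count hmcard hcrossB
      have he2 : (B.erase o).filter (fun o'' => (m ∩ o'').card = 1)
          = (B.filter fun c => (c ∩ m).card = 1).erase o := by
        rw [← Finset.filter_erase]
        apply filter_congr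
        intro c _
        rw [Finset.inter_comm]
      rw [he2, card_erase_of_mem, hBm]
      · omega
      · rw [mem_filter]
        exact ⟨ho, by rw [Finset.inter_comm]; exact hmtan⟩
    rw [Finset.sum_congr rfl hterm, Finset.sum_const, smul_eq_mul,
      ht0card, card_erase_of_mem ho, hB.1]
    have : (q + 1) * q = q ^ 2 + q := by ring
    omega
  have hall := all_one_of_one_le hone_le hsum.le o' (mem_erase.mpr ⟨hne.symm, ho'⟩)
  have he : t0.filter (fun m => (m ∩ o').card = 1)
      = L.filter fun m => (m ∩ o).card = 1 ∧ (m ∩ o').card = 1 := by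
    rw [ht0def, filter_filter]
  rw [← he]
  exact hall

lemma zmod2_add_eq_zero {a b : ZMod 2} (h : a + b = 0) : a = b := by
  revert h; revert a b; decide

lemma parity_rel {C D : Finset (Finset P)} (hodd : Odd q)
    (hD : NiceFamily q D)
    (hcross : ∀ c ∈ C, ∀ d ∈ D, (c ∩ d).card ≤ 2)
    {S U : Finset (Finset P)} (hS : S ⊆ C) (hU : U ⊆ D)
    (hpar : ∀ p : P, ((S.filter fun c => p ∈ c).card : ZMod 2)
      + ((U.filter fun c => p ∈ c).card : ZMod 2) = 0) :
    ∀ d ∈ D, ((S.filter fun c => (c ∩ d).card = 1).card : ZMod 2)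
      = (U.card : ZMod 2) + (if d ∈ U then 1 else 0) := by
  classical
  intro d hd
  have hsum : ∑ p ∈ d, (((S.filter fun c => p ∈ c).card : ZMod 2)
      + ((U.filter fun c => p ∈ c).card : ZMod 2)) = 0 :=
    Finset.sum_eq_zero fun p _ => hpar p
  rw [Finset.sum_add_distrib] at hsum
  have h1 : ∑ p ∈ d, ((S.filter fun c => p ∈ c).card : ZMod 2)
      = ((S.filter fun c => (c ∩ d).card = 1).card : ZMod 2) := by
    have hterm : ∀ c ∈ S, (d.filter fun p => p ∈ c).card = (c ∩ d).card := by
      intro c _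
      congr 1
      ext z; simp only [mem_filter, mem_inter]; tauto
    rw [← Nat.cast_sum, dcount d S (fun p c => p ∈ c), Finset.sum_congr rfl hterm,
      Finset.card_filter, Nat.cast_sum, Nat.cast_sum]
    refine Finset.sum_congr rfl fun c hc => ?_
    rw [zmod2_cast_card (hcross c (hS hc) d hd)]
    by_cases h : (c ∩ d).card = 1 <;> simp [h]
  have h2 : ∑ p ∈ d, ((U.filter fun c => p ∈ c).card : ZMod 2)
      = (U.card : ZMod 2) + (if d ∈ U then 1 else 0) := by
    have hterm : ∀ c ∈ U, (d.filter fun p => p ∈ c).card = (c ∩ d).card := by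
      intro c _
      congr 1
      ext z; simp only [mem_filter, mem_inter]; tauto
    have e2 : ∑ p ∈ d, ((U.filter fun c => p ∈ c).card : ZMod 2)
        = ∑ c ∈ U, (((c ∩ d).card : ℕ) : ZMod 2) := by
      rw [← Nat.cast_sum, dcount d U (fun p c => p ∈ c), Finset.sum_congr rfl hterm,
        Nat.cast_sum]
    rw [e2]
    by_cases hdU : d ∈ U
    · rw [← Finset.sum_erase_add _ _ hdU]
      have hone : ∀ c ∈ U.erase d, (((c ∩ d).card : ℕ) : ZMod 2) = 1 := by
        intro c hc
        rw [mem_erase] at hc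
        rw [hD.inter c (hU hc.2) d hd hc.1, Nat.cast_one]
      have hdd : (((d ∩ d).card : ℕ) : ZMod 2) = ((q + 1 : ℕ) : ZMod 2) := by
        rw [Finset.inter_self, hD.csize d hd]
      rw [Finset.sum_congr rfl hone, Finset.sum_const, nsmul_eq_mul, mul_one, hdd,
        card_erase_of_mem hdU, if_pos hdU]
      have hb : 1 ≤ U.card := card_pos.mpr ⟨d, hdU⟩
      rw [Nat.cast_sub hb]
      push_cast
      rw [zmod2_odd hodd]
      ring
    · have hone : ∀ c ∈ U, (((c ∩ d).card : ℕ) : ZMod 2) = 1 := by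
        intro c hc
        rw [hD.inter c (hU hc) d hd (fun h => hdU (h ▸ hc)), Nat.cast_one]
      rw [Finset.sum_congr rfl hone, Finset.sum_const, nsmul_eq_mul, mul_one,
        if_neg hdU, add_zero]
  rw [h1, h2] at hsum
  exact zmod2_add_eq_zero hsum

lemma attach_filter_card_eq {A : Finset (Finset P)} (pred : Finset P → Prop)
    [DecidablePred pred] :
    (A.attach.filter fun m => pred m.1).card = (A.filter pred).card := by
  conv_rhs => rw [← Finset.attach_image_val (s := A)]
  rw [Finset.filter_image, Finset.card_image_of_injective _ Subtype.val_injective]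

lemma zsupport_sum {A : Finset (Finset P)} (f : {m // m ∈ A} → ZMod 2) (p : P) :
    ∑ m : {m // m ∈ A}, (if p ∈ m.1 then (1 : ZMod 2) else 0) * f m
      = ((((A.attach.filter fun m => f m ≠ 0).image Subtype.val).filter
          fun c => p ∈ c).card : ZMod 2) := by
  classical
  have h1 : ∑ m : {m // m ∈ A}, (if p ∈ m.1 then (1 : ZMod 2) else 0) * f m
      = ∑ m ∈ A.attach, (if f m ≠ 0 ∧ p ∈ m.1 then (1 : ZMod 2) else 0) := by
    rw [Finset.univ_eq_attach]
    refine Finset.sum_congr rfl fun m _ => ?_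
    have hv : f m = 0 ∨ f m = 1 := by
      have : ∀ v : ZMod 2, v = 0 ∨ v = 1 := by decide
      exact this (f m)
    rcases hv with h | h <;> by_cases hp : p ∈ m.1 <;> simp [h, hp]
  rw [h1, Finset.filter_image, Finset.card_image_of_injective _ Subtype.val_injective,
    filter_filter, Finset.card_filter, Nat.cast_sum]
  refine Finset.sum_congr rfl fun m _ => ?_
  by_cases h : f m ≠ 0 ∧ p ∈ m.1 <;> simp [h]

/-- For `q ≥ 2` odd, a projective bundle `B` and any line `ℓ ∈ L`, the
configuration consisting of `ℓ` together with the `q + 1` ovals of `B` tangent to `ℓ`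
covers every point exactly 0 or exactly 2 times; in particular the binary code with
parity-check matrix `H = (A | M)` contains a codeword of Hamming weight exactly `q + 2`,
and its minimum distance equals `q + 2`. -/
theorem statement_14 (q : ℕ) (hq : 2 ≤ q) (hodd : Odd q) (P : Type) [Fintype P] [DecidableEq P]
    (L : Finset (Finset P)) (hL : IsProjectivePlane q L)
    (B : Finset (Finset P)) (hB : IsProjectiveBundle q L B)
    (ℓ : Finset P) (hℓ : ℓ ∈ L) :
    let T : Finset (Finset P) := B.filter fun o => (o ∩ ℓ).card = 1
    let H : Matrix P ({m // m ∈ L} ⊕ {o // o ∈ B}) (ZMod 2) :=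
      Matrix.of fun p c =>
        Sum.elim (fun m : {m // m ∈ L} => if p ∈ m.1 then (1 : ZMod 2) else 0)
          (fun o : {o // o ∈ B} => if p ∈ o.1 then 1 else 0) c
    (∀ p : P,
      (if p ∈ ℓ then 1 else 0) + (T.filter fun o => p ∈ o).card = 0 ∨
      (if p ∈ ℓ then 1 else 0) + (T.filter fun o => p ∈ o).card = 2) ∧
    (∃ x : ({m // m ∈ L} ⊕ {o // o ∈ B}) → ZMod 2,
      H.mulVec x = 0 ∧ hammingNorm x = q + 2) ∧
    (∀ x : ({m // m ∈ L} ⊕ {o // o ∈ B}) → ZMod 2,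
      x ≠ 0 → H.mulVec x = 0 → q + 2 ≤ hammingNorm x) := by
  classical
  intro T H
  have hniceL : NiceFamily q L := hL.nice
  have hniceB : NiceFamily q B := bundle_nice hL hB
  have hKL : ℓ.card = q + 1 := hL.card_line ℓ hℓ
  have hK2 : ∀ o ∈ B, (o ∩ ℓ).card ≤ 2 := fun o ho => by
    rw [Finset.inter_comm]; exact (hB.2.1 o ho).2 ℓ hℓ
  have hTcard : T.card = q + 1 := hniceB.tangent_count hKL hK2
  have part1 : ∀ p : P,
      (if p ∈ ℓ then 1 else 0) + (T.filter fun o => p ∈ o).card = 0 ∨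
      (if p ∈ ℓ then 1 else 0) + (T.filter fun o => p ∈ o).card = 2 := by
    intro p
    have hTfe : T.filter (fun o => p ∈ o) = B.filter fun o => p ∈ o ∧ (o ∩ ℓ).card = 1 := by
      show (B.filter fun o => (o ∩ ℓ).card = 1).filter (fun o => p ∈ o) = _
      rw [filter_filter]
      exact filter_congr fun o _ => by tauto
    by_cases hp : p ∈ ℓ
    · right
      rw [if_pos hp, hTfe, hniceB.tangent_at hKL hK2 hp]
    · rw [if_neg hp, hTfe]
      rcases hniceB.off_tangent hKL hK2 hodd hp with h | h
      · left; omega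
      · right; omega
  have hmv : ∀ (x : ({m // m ∈ L} ⊕ {o // o ∈ B}) → ZMod 2) (p : P), H.mulVec x p
      = (∑ m : {m // m ∈ L}, (if p ∈ m.1 then (1:ZMod 2) else 0) * x (Sum.inl m))
        + (∑ o : {o // o ∈ B}, (if p ∈ o.1 then (1:ZMod 2) else 0) * x (Sum.inr o)) := by
    intro x p
    show ∑ c : ({m // m ∈ L} ⊕ {o // o ∈ B}), H p c * x c = _
    rw [Fintype.sum_sum_type]
    rfl
  refine ⟨part1, ?_, ?_⟩
  · -- PART 2 : a codeword of weight q+2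
    refine ⟨Sum.elim (fun m => if m.1 = ℓ then 1 else 0)
        (fun o => if (o.1 ∩ ℓ).card = 1 then 1 else 0), ?_, ?_⟩
    · funext p
      simp only [Pi.zero_apply]
      rw [hmv]
      simp only [Sum.elim_inl, Sum.elim_inr]
      have hsl : ∑ m : {m // m ∈ L},
          (if p ∈ m.1 then (1:ZMod 2) else 0) * (if m.1 = ℓ then (1:ZMod 2) else 0)
          = if p ∈ ℓ then 1 else 0 := by
        rw [Finset.sum_eq_single_of_mem (⟨ℓ, hℓ⟩ : {m // m ∈ L}) (Finset.mem_univ _)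
          (fun m _ hm => by
            have hne : m.1 ≠ ℓ := fun h => hm (Subtype.ext h)
            simp [hne])]
        simp
      have hso : ∑ o : {o // o ∈ B},
          (if p ∈ o.1 then (1:ZMod 2) else 0) * (if (o.1 ∩ ℓ).card = 1 then (1:ZMod 2) else 0)
          = ((T.filter fun o => p ∈ o).card : ZMod 2) := by
        have h1 : ∀ o : {o // o ∈ B},
            (if p ∈ o.1 then (1:ZMod 2) else 0) * (if (o.1 ∩ ℓ).card = 1 then (1:ZMod 2) else 0)
            = if (o.1 ∩ ℓ).card = 1 ∧ p ∈ o.1 then 1 else 0 := by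
          intro o
          by_cases ha : p ∈ o.1 <;> by_cases hb : (o.1 ∩ ℓ).card = 1 <;> simp [ha, hb]
        rw [Finset.sum_congr rfl (fun o _ => h1 o), Finset.univ_eq_attach]
        have h2 : ∑ o ∈ B.attach, (if (o.1 ∩ ℓ).card = 1 ∧ p ∈ o.1 then (1:ZMod 2) else 0)
            = ((B.attach.filter fun o => (o.1 ∩ ℓ).card = 1 ∧ p ∈ o.1).card : ZMod 2) := by
          rw [Finset.card_filter, Nat.cast_sum]
          exact Finset.sum_congr rfl fun o _ => by
            by_cases h : (o.1 ∩ ℓ).card = 1 ∧ p ∈ o.1 <;> simp [h]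
        rw [h2, attach_filter_card_eq (fun c => (c ∩ ℓ).card = 1 ∧ p ∈ c)]
        congr 1
        show _ = ((B.filter fun o => (o ∩ ℓ).card = 1).filter (fun o => p ∈ o)).card
        rw [filter_filter]
      rw [hsl, hso]
      have hcast : (if p ∈ ℓ then (1:ZMod 2) else 0) + ((T.filter fun o => p ∈ o).card : ZMod 2)
          = (((if p ∈ ℓ then 1 else 0) + (T.filter fun o => p ∈ o).card : ℕ) : ZMod 2) := by
        push_cast
        by_cases hp : p ∈ ℓ <;> simp [hp]
      rw [hcast]
      rcases part1 p with h | h <;> rw [h] <;> decide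
    · show ((univ : Finset ({m // m ∈ L} ⊕ {o // o ∈ B})).filter
        fun c => Sum.elim (fun m => if m.1 = ℓ then (1:ZMod 2) else 0)
          (fun o => if (o.1 ∩ ℓ).card = 1 then (1:ZMod 2) else 0) c ≠ 0).card = q + 2
      rw [Finset.card_filter, Fintype.sum_sum_type]
      simp only [Sum.elim_inl, Sum.elim_inr]
      have h1 : ∑ m : {m // m ∈ L},
          (if (if m.1 = ℓ then (1:ZMod 2) else 0) ≠ 0 then 1 else 0) = 1 := by
        rw [Finset.sum_eq_single_of_mem (⟨ℓ, hℓ⟩ : {m // m ∈ L}) (Finset.mem_univ _)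
          (fun m _ hm => by
            have hne : m.1 ≠ ℓ := fun h => hm (Subtype.ext h)
            simp [hne])]
        simp
      have h2 : ∑ o : {o // o ∈ B},
          (if (if (o.1 ∩ ℓ).card = 1 then (1:ZMod 2) else 0) ≠ 0 then 1 else 0) = q + 1 := by
        have he : ∀ o : {o // o ∈ B},
            (if (if (o.1 ∩ ℓ).card = 1 then (1:ZMod 2) else 0) ≠ 0 then 1 else 0)
            = if (o.1 ∩ ℓ).card = 1 then 1 else 0 := by
          intro o
          by_cases h : (o.1 ∩ ℓ).card = 1 <;> simp [h]
        rw [Finset.sum_congr rfl (fun o _ => he o), Finset.univ_eq_attach,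
          ← Finset.card_filter, attach_filter_card_eq (fun c => (c ∩ ℓ).card = 1)]
        exact hTcard
      calc _ = 1 + (q + 1) := congrArg₂ (· + ·) h1 h2
        _ = q + 2 := by omega
  · -- PART 3 : minimum distance
    intro x hx hx0
    obtain ⟨Sf, hSf⟩ : ∃ s, s = (L.attach.filter fun m => x (Sum.inl m) ≠ 0).image Subtype.val :=
      ⟨_, rfl⟩
    obtain ⟨Uf, hUf⟩ : ∃ s, s = (B.attach.filter fun o => x (Sum.inr o) ≠ 0).image Subtype.val :=
      ⟨_, rfl⟩
    have hSsub : Sf ⊆ L := by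
      intro m hm
      rw [hSf, Finset.mem_image] at hm
      obtain ⟨m', _, rfl⟩ := hm
      exact m'.2
    have hUsub : Uf ⊆ B := by
      intro o ho
      rw [hUf, Finset.mem_image] at ho
      obtain ⟨o', _, rfl⟩ := ho
      exact o'.2
    have hnorm : hammingNorm x = Sf.card + Uf.card := by
      show ((univ : Finset ({m // m ∈ L} ⊕ {o // o ∈ B})).filter fun c => x c ≠ 0).card = _
      rw [Finset.card_filter, Fintype.sum_sum_type]
      have e1 : ∑ m : {m // m ∈ L}, (if x (Sum.inl m) ≠ 0 then 1 else 0) = Sf.card := by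
        rw [hSf, Finset.card_image_of_injective _ Subtype.val_injective,
          Finset.card_filter, Finset.univ_eq_attach]
      have e2 : ∑ o : {o // o ∈ B}, (if x (Sum.inr o) ≠ 0 then 1 else 0) = Uf.card := by
        rw [hUf, Finset.card_image_of_injective _ Subtype.val_injective,
          Finset.card_filter, Finset.univ_eq_attach]
      rw [e1, e2]
    rw [hnorm]
    have hpar : ∀ p : P, ((Sf.filter fun c => p ∈ c).card : ZMod 2)
        + ((Uf.filter fun c => p ∈ c).card : ZMod 2) = 0 := by
      intro p
      have h0 : H.mulVec x p = 0 := by rw [hx0]; rfl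
      rw [hmv] at h0
      rw [zsupport_sum (fun m => x (Sum.inl m)) p, zsupport_sum (fun o => x (Sum.inr o)) p] at h0
      rw [hSf, hUf]
      exact h0
    have hNL : L.card = q ^ 2 + q + 1 := hL.card_lines
    have hcrossLB : ∀ c ∈ L, ∀ d ∈ B, (c ∩ d).card ≤ 2 :=
      fun c hc d hd => (hB.2.1 d hd).2 c hc
    have hcrossBL : ∀ c ∈ B, ∀ d ∈ L, (c ∩ d).card ≤ 2 := fun c hc d hd => by
      rw [Finset.inter_comm]; exact (hB.2.1 c hc).2 d hd
    have hR1 : ∀ o ∈ B, ((Sf.filter fun c => (c ∩ o).card = 1).card : ZMod 2)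
        = (Uf.card : ZMod 2) + (if o ∈ Uf then 1 else 0) :=
      parity_rel hodd hniceB hcrossLB hSsub hUsub hpar
    have hR2 : ∀ m ∈ L, ((Uf.filter fun c => (c ∩ m).card = 1).card : ZMod 2)
        = (Sf.card : ZMod 2) + (if m ∈ Sf then 1 else 0) :=
      parity_rel hodd hniceL hcrossBL hUsub hSsub (fun p => by rw [add_comm]; exact hpar p)
    have hne : Sf.Nonempty ∨ Uf.Nonempty := by
      by_contra hcon
      push_neg at hcon
      apply hx
      funext c
      rcases c with m | o
      · by_contra hxc
        have hmem : m.1 ∈ Sf := by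
          rw [hSf]
          exact Finset.mem_image_of_mem _ (mem_filter.mpr ⟨Finset.mem_attach _ _, hxc⟩)
        rw [hcon.1] at hmem; exact Finset.notMem_empty _ hmem
      · by_contra hxc
        have hmem : o.1 ∈ Uf := by
          rw [hUf]
          exact Finset.mem_image_of_mem _ (mem_filter.mpr ⟨Finset.mem_attach _ _, hxc⟩)
        rw [hcon.2] at hmem; exact Finset.notMem_empty _ hmem
    by_cases hSL : Sf = L
    · have hSc : Sf.card = q ^ 2 + q + 1 := by rw [hSL, hNL]
      have : q + 2 ≤ q ^ 2 + q + 1 := by nlinarith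
      omega
    by_cases hS0 : Sf = ∅
    · have hUne : Uf.Nonempty := by
        rcases hne with h | h
        · rw [hS0] at h; exact absurd h (by simp)
        · exact h
      obtain ⟨o₀, ho₀⟩ := hUne
      have hb1 : ((Uf.card : ZMod 2)) = 1 := by
        have h := hR1 o₀ (hUsub ho₀)
        rw [hS0, Finset.filter_empty, Finset.card_empty, if_pos ho₀] at h
        have : ∀ a : ZMod 2, ((0:ℕ) : ZMod 2) = a + 1 → a = 1 := by decide
        exact this _ h
      have hUeq : Uf = B := by
        apply Finset.Subset.antisymm hUsub
        intro o ho
        have h := hR1 o ho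
        rw [hS0, Finset.filter_empty, Finset.card_empty, hb1] at h
        by_contra hoU
        rw [if_neg hoU, add_zero] at h
        exact absurd h (by decide)
      have hUc : Uf.card = q ^ 2 + q + 1 := by rw [hUeq, hB.1]
      have : q + 2 ≤ q ^ 2 + q + 1 := by nlinarith
      omega
    have hSfne : Sf.Nonempty := Finset.nonempty_iff_ne_empty.mpr hS0
    rcases Nat.even_or_odd Sf.card with haeven | haodd
    · -- a even
      have hacast : ((Sf.card : ZMod 2)) = 0 := zmod2_even haeven
      obtain ⟨m₁, hm₁⟩ := hSfne
      have hm₁L : m₁ ∈ L := hSsub hm₁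
      have hUo : (Uf.filter fun c => (c ∩ m₁).card = 1).Nonempty := by
        have h := hR2 m₁ hm₁L
        rw [hacast, zero_add, if_pos hm₁] at h
        rw [Finset.nonempty_iff_ne_empty]
        intro hcon
        rw [hcon, Finset.card_empty] at h
        exact absurd h (by decide)
      obtain ⟨o₀, ho₀f⟩ := hUo
      have ho₀U : o₀ ∈ Uf := Finset.mem_of_mem_filter _ ho₀f
      have ho₀B : o₀ ∈ B := hUsub ho₀U
      have ho₀card : o₀.card = q + 1 := (hB.2.1 o₀ ho₀B).1
      have hcr : ∀ m ∈ L, (m ∩ o₀).card ≤ 2 := fun m hm => hcrossLB m hm o₀ ho₀B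
      have ht0card : (L.filter fun m => (m ∩ o₀).card = 1).card = q + 1 :=
        hniceL.tangent_count ho₀card hcr
      have hgood : ∀ m ∈ (L.filter fun m => (m ∩ o₀).card = 1).filter
          (fun m => ¬ ∃ o' ∈ Uf.erase o₀, (m ∩ o').card = 1), m ∈ Sf := by
        intro m hm
        rw [mem_filter] at hm
        obtain ⟨hmt0, hmgood⟩ := hm
        rw [mem_filter] at hmt0
        have hfe : Uf.filter (fun c => (c ∩ m).card = 1) = {o₀} := by
          ext c
          rw [mem_filter, Finset.mem_singleton]
          constructor
          · rintro ⟨hcU, hc1⟩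
            by_contra hne'
            exact hmgood ⟨c, mem_erase.mpr ⟨hne', hcU⟩, by rw [Finset.inter_comm]; exact hc1⟩
          · rintro rfl
            exact ⟨ho₀U, by rw [Finset.inter_comm]; exact hmt0.2⟩
        have h := hR2 m hmt0.1
        rw [hfe, hacast, zero_add, Finset.card_singleton] at h
        by_contra hmS
        rw [if_neg hmS] at h
        exact absurd h (by decide)
      have hbadcard : ((L.filter fun m => (m ∩ o₀).card = 1).filter
          (fun m => ∃ o' ∈ Uf.erase o₀, (m ∩ o').card = 1)).card ≤ (Uf.erase o₀).card := by
        have hsubb : (L.filter fun m => (m ∩ o₀).card = 1).filter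
            (fun m => ∃ o' ∈ Uf.erase o₀, (m ∩ o').card = 1)
            ⊆ (Uf.erase o₀).biUnion
              (fun o' => L.filter fun m => (m ∩ o₀).card = 1 ∧ (m ∩ o').card = 1) := by
          intro m hm
          rw [mem_filter] at hm
          obtain ⟨hmt0, o', ho', h1⟩ := hm
          rw [mem_filter] at hmt0
          rw [Finset.mem_biUnion]
          exact ⟨o', ho', mem_filter.mpr ⟨hmt0.1, hmt0.2, h1⟩⟩
        refine (Finset.card_le_card hsubb).trans ?_
        refine (Finset.card_biUnion_le).trans ?_
        have hct : ∀ o' ∈ Uf.erase o₀,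
            (L.filter fun m => (m ∩ o₀).card = 1 ∧ (m ∩ o').card = 1).card = 1 := by
          intro o' ho'
          rw [mem_erase] at ho'
          exact common_tangent_card hL hB hodd ho₀B (hUsub ho'.2) (fun h => ho'.1 h.symm)
        rw [Finset.sum_congr rfl hct, Finset.sum_const, smul_eq_mul, mul_one]
      have hsplit : ((L.filter fun m => (m ∩ o₀).card = 1).filter
            (fun m => ∃ o' ∈ Uf.erase o₀, (m ∩ o').card = 1)).card
          + ((L.filter fun m => (m ∩ o₀).card = 1).filter
            (fun m => ¬ ∃ o' ∈ Uf.erase o₀, (m ∩ o').card = 1)).card = q + 1 := by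
        rw [Finset.card_filter_add_card_filter_not, ht0card]
      have h1 : ((L.filter fun m => (m ∩ o₀).card = 1).filter
          (fun m => ¬ ∃ o' ∈ Uf.erase o₀, (m ∩ o').card = 1)).card ≤ Sf.card :=
        Finset.card_le_card (fun m hm => hgood m hm)
      have h2 : (Uf.erase o₀).card + 1 = Uf.card := Finset.card_erase_add_one ho₀U
      omega
    · -- a odd
      have hacast : ((Sf.card : ZMod 2)) = 1 := zmod2_odd haodd
      have hex : ∃ m₀ ∈ L, m₀ ∉ Sf := by
        by_contra hcon
        push_neg at hcon
        exact hSL (Finset.Subset.antisymm hSsub (fun m hm => hcon m hm))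
      obtain ⟨m₀, hm₀L, hm₀S⟩ := hex
      have hUfne : Uf.Nonempty := by
        have h := hR2 m₀ hm₀L
        rw [hacast, if_neg hm₀S, add_zero] at h
        have hne0 : (Uf.filter fun c => (c ∩ m₀).card = 1).Nonempty := by
          rw [Finset.nonempty_iff_ne_empty]
          intro hcon
          rw [hcon, Finset.card_empty] at h
          exact absurd h (by decide)
        obtain ⟨o', ho'⟩ := hne0
        exact ⟨o', Finset.mem_of_mem_filter _ ho'⟩
      have hcov : L.card ≤ Sf.card + Uf.card * (q + 1) := by
        have hsubc : L ⊆ Sf ∪ Uf.biUnion (fun o => L.filter fun m => (m ∩ o).card = 1) := by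
          intro m hm
          rw [Finset.mem_union]
          by_cases hmS : m ∈ Sf
          · left; exact hmS
          · right
            have h := hR2 m hm
            rw [hacast, if_neg hmS, add_zero] at h
            have hne0 : (Uf.filter fun c => (c ∩ m).card = 1).Nonempty := by
              rw [Finset.nonempty_iff_ne_empty]
              intro hcon
              rw [hcon, Finset.card_empty] at h
              exact absurd h (by decide)
            obtain ⟨o', ho'⟩ := hne0
            rw [mem_filter] at ho'
            rw [Finset.mem_biUnion]
            exact ⟨o', ho'.1, mem_filter.mpr ⟨hm, by rw [Finset.inter_comm]; exact ho'.2⟩⟩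
        calc L.card ≤ (Sf ∪ Uf.biUnion (fun o => L.filter fun m => (m ∩ o).card = 1)).card :=
              Finset.card_le_card hsubc
          _ ≤ Sf.card + (Uf.biUnion (fun o => L.filter fun m => (m ∩ o).card = 1)).card :=
              Finset.card_union_le _ _
          _ ≤ Sf.card + ∑ o ∈ Uf, (L.filter fun m => (m ∩ o).card = 1).card :=
              Nat.add_le_add_left Finset.card_biUnion_le _
          _ ≤ Sf.card + Uf.card * (q + 1) := by
              have hterm : ∀ o ∈ Uf, (L.filter fun m => (m ∩ o).card = 1).card = q + 1 :=
                fun o ho => hniceL.tangent_count ((hB.2.1 o (hUsub ho)).1)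
                  (fun m hm => hcrossLB m hm o (hUsub ho))
              rw [Finset.sum_congr rfl hterm, Finset.sum_const, smul_eq_mul]
      by_contra hcon
      push_neg at hcon
      have hapos : 1 ≤ Sf.card := Finset.card_pos.mpr hSfne
      have hbpos : 1 ≤ Uf.card := Finset.card_pos.mpr hUfne
      have hsq : q ^ 2 = q * q := by ring
      have hq2 : q * q ≤ Uf.card * q := by
        have expand : Uf.card * (q + 1) = Uf.card + Uf.card * q := by ring
        omega
      have hbq : q ≤ Uf.card := Nat.le_of_mul_le_mul_right hq2 (by omega)
      have hbeq : Uf.card = q := by omega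
      have haeq : Sf.card = 1 := by omega
      obtain ⟨m₁, hm₁⟩ := Finset.card_eq_one.mp haeq
      have hm₁L : m₁ ∈ L := hSsub (hm₁ ▸ Finset.mem_singleton_self m₁)
      have hsup : ∀ o ∈ B, ¬((m₁ ∩ o).card = 1) → o ∈ Uf := by
        intro o hoB hnt
        have h := hR1 o hoB
        rw [hm₁, Finset.filter_singleton, if_neg hnt, Finset.card_empty, hbeq,
          zmod2_odd hodd] at h
        by_contra hoU
        rw [if_neg hoU, add_zero] at h
        exact absurd h (by decide)
      have hq2card : (B.filter fun o => ¬ (m₁ ∩ o).card = 1).card ≤ Uf.card :=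
        Finset.card_le_card (fun o ho => hsup o (mem_filter.mp ho).1 (mem_filter.mp ho).2)
      have htcnt : (B.filter fun o => (m₁ ∩ o).card = 1).card = q + 1 := by
        have hbt := hniceB.tangent_count (hL.card_line m₁ hm₁L)
          (fun o ho => hcrossBL o ho m₁ hm₁L)
        rw [← hbt]
        congr 1
        apply filter_congr
        intro o _
        rw [Finset.inter_comm]
      have hsplitB : (B.filter fun o => (m₁ ∩ o).card = 1).card
          + (B.filter fun o => ¬ (m₁ ∩ o).card = 1).card = q ^ 2 + q + 1 := by
        rw [Finset.card_filter_add_card_filter_not, hB.1]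
      have hmul : 2 * q ≤ q * q := by nlinarith
      omega
end Fam
end

section
/- Let q ≥ 2 be even, let (P, L) be a finite projective plane of order q, and let B be a projective bundle. Suppose L' ⊆ L is a set of r lines and O' ⊆ B is a set of s ovals with r + s = q + 2, such that every point of P belongs to an even number of elements of L' ⊔ O'. Then either (r, s) = (q+2, 0) and L' is a dual hyperoval (every point of P lies on exactly 0 or exactly 2 lines of L'), or (r, s) = (0, q+2) and every point of P lies on exactly 0 or exactly 2 ovals of O'. -/
open Finset

variable {P : Type} [Fintype P] [DecidableEq P]

lemma sum_filter_card_eq_sum_inter_card (S : Finset (Finset P)) (b : Finset P) :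
    ∑ p ∈ b, (S.filter fun c => p ∈ c).card = ∑ c ∈ S, (b ∩ c).card := by
  simp only [Finset.card_filter]
  rw [Finset.sum_comm]
  congr 1
  ext c
  rw [show b ∩ c = b.filter (· ∈ c) from rfl, Finset.card_filter]

lemma sum_filter_card_univ (S : Finset (Finset P)) :
    ∑ p : P, (S.filter fun c => p ∈ c).card = ∑ c ∈ S, c.card := by
  have := sum_filter_card_eq_sum_inter_card S Finset.univ
  simpa using this

set_option linter.unusedSectionVars false
set_option maxHeartbeats 1000000

lemma filter_mem_swap (x : P) (S : Finset (Finset P)) (Q : Finset P → Prop) [DecidablePred Q] :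
    (S.filter Q).filter (fun c => x ∈ c) = (S.filter fun c => x ∈ c).filter Q :=
  Finset.filter_comm _ _ _

/-- Abstract "plane" data: a block system in which two points determine a unique
block, each block has `q+1` points, each point is on `q+1` blocks, and there are
`q²+q+1` points. -/
structure PD (q : ℕ) (Bl : Finset (Finset P)) : Prop where
  two_pts : ∀ p₁ p₂ : P, p₁ ≠ p₂ → ∃! b, b ∈ Bl ∧ p₁ ∈ b ∧ p₂ ∈ b
  card_block : ∀ b ∈ Bl, b.card = q + 1
  point_deg : ∀ p : P, (Bl.filter fun b => p ∈ b).card = q + 1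
  card_pts : Fintype.card P = q ^ 2 + q + 1

namespace PD

variable {q : ℕ} {Bl : Finset (Finset P)} (h : PD q Bl)
include h

/-- The block through two distinct points. -/
noncomputable def blk (p₁ p₂ : P) : Finset P :=
  if hne : p₁ ≠ p₂ then (h.two_pts p₁ p₂ hne).exists.choose else ∅

lemma blk_spec {p₁ p₂ : P} (hne : p₁ ≠ p₂) :
    h.blk p₁ p₂ ∈ Bl ∧ p₁ ∈ h.blk p₁ p₂ ∧ p₂ ∈ h.blk p₁ p₂ := by
  rw [blk, dif_pos hne]
  exact (h.two_pts p₁ p₂ hne).exists.choose_spec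

lemma blk_unique {p₁ p₂ : P} (hne : p₁ ≠ p₂) {b : Finset P}
    (hb : b ∈ Bl) (h1 : p₁ ∈ b) (h2 : p₂ ∈ b) : b = h.blk p₁ p₂ :=
  (h.two_pts p₁ p₂ hne).unique ⟨hb, h1, h2⟩ (h.blk_spec hne)

lemma eq_of_two_mem {p₁ p₂ : P} (hne : p₁ ≠ p₂) {b b' : Finset P}
    (hb : b ∈ Bl) (hb' : b' ∈ Bl) (h1 : p₁ ∈ b) (h2 : p₂ ∈ b)
    (h1' : p₁ ∈ b') (h2' : p₂ ∈ b') : b = b' := by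
  rw [h.blk_unique hne hb h1 h2, h.blk_unique hne hb' h1' h2']

lemma inter_card {b₁ b₂ : Finset P} (hb₁ : b₁ ∈ Bl) (hb₂ : b₂ ∈ Bl) (hne : b₁ ≠ b₂) :
    (b₁ ∩ b₂).card = 1 := by
  have hle : (b₁ ∩ b₂).card ≤ 1 := by
    by_contra hlt
    push_neg at hlt
    obtain ⟨x, hx, y, hy, hxy⟩ := Finset.one_lt_card.mp hlt
    simp only [Finset.mem_inter] at hx hy
    exact hne (h.eq_of_two_mem hxy hb₁ hb₂ hx.1 hy.1 hx.2 hy.2)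
  rcases Finset.eq_empty_or_nonempty (b₁ ∩ b₂) with hemp | hne'
  · exfalso
    -- pick p ∈ b₂ \ b₁
    have hnsub : ¬ b₂ ⊆ b₁ := by
      intro hsub
      exact hne (Finset.eq_of_subset_of_card_le hsub
        (by rw [h.card_block b₁ hb₁, h.card_block b₂ hb₂]) ).symm
    obtain ⟨p, hp2, hp1⟩ := Finset.not_subset.mp hnsub
    -- the map x ↦ blk p x from b₁ into blocks through p
    have hinj : Set.InjOn (fun x => h.blk p x) b₁ := by
      intro x hx y hy hxy
      simp only at hxy
      by_contra hxyne
      have hxp : p ≠ x := fun hp => hp1 (hp ▸ hx)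
      have hyp : p ≠ y := fun hp => hp1 (hp ▸ hy)
      have hsx := h.blk_spec hxp
      have hsy := h.blk_spec hyp
      rw [hxy] at hsx
      exact hp1 ((h.eq_of_two_mem hxyne hsx.1 hb₁ (hxy ▸ (h.blk_spec hxp).2.2) hsy.2.2 hx hy) ▸ hsx.2.1)
    have himg : Finset.image (fun x => h.blk p x) b₁ ⊆ Bl.filter fun b => p ∈ b := by
      intro b hb
      obtain ⟨x, hx, rfl⟩ := Finset.mem_image.mp hb
      have hxp : p ≠ x := fun hp => hp1 (hp ▸ hx)
      exact Finset.mem_filter.mpr ⟨(h.blk_spec hxp).1, (h.blk_spec hxp).2.1⟩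
    have hcardimg : (Finset.image (fun x => h.blk p x) b₁).card = q + 1 := by
      rw [Finset.card_image_of_injOn hinj, h.card_block b₁ hb₁]
    have heq : Finset.image (fun x => h.blk p x) b₁ = Bl.filter fun b => p ∈ b :=
      Finset.eq_of_subset_of_card_le himg (by rw [hcardimg, h.point_deg p])
    have hb₂mem : b₂ ∈ Finset.image (fun x => h.blk p x) b₁ := by
      rw [heq]; exact Finset.mem_filter.mpr ⟨hb₂, hp2⟩
    obtain ⟨x, hx, hbx⟩ := Finset.mem_image.mp hb₂mem
    have hxp : p ≠ x := fun hp => hp1 (hp ▸ hx)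
    have := (h.blk_spec hxp).2.2
    rw [hbx] at this
    rw [Finset.eq_empty_iff_forall_notMem] at hemp
    exact hemp x (Finset.mem_inter.mpr ⟨hx, this⟩)
  · have := Finset.card_pos.mpr hne'
    omega
    

lemma card_Bl : Bl.card = q ^ 2 + q + 1 := by
  have hdc := sum_filter_card_univ Bl
  have h1 : ∑ p : P, (Bl.filter fun c => p ∈ c).card = (q ^ 2 + q + 1) * (q + 1) := by
    rw [Finset.sum_congr rfl (fun p _ => h.point_deg p)]
    simp [h.card_pts, Finset.card_univ]
  have h2 : ∑ c ∈ Bl, c.card = Bl.card * (q + 1) := by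
    rw [Finset.sum_congr rfl (fun c hc => h.card_block c hc), Finset.sum_const, smul_eq_mul]
  have : (q ^ 2 + q + 1) * (q + 1) = Bl.card * (q + 1) := by rw [← h1, hdc, h2]
  exact (Nat.eq_of_mul_eq_mul_right (by omega) this).symm

section Arc

variable {O : Finset P} (hO : O.card = q + 1) (harc : ∀ b ∈ Bl, (b ∩ O).card ≤ 2)
include hO harc

/-- At each point of an arc of size `q+1` there is a unique tangent block. -/
lemma tangent_at {p : P} (hp : p ∈ O) :
    ((Bl.filter fun b => p ∈ b).filter fun b => (b ∩ O).card = 1).card = 1 ∧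
    ((Bl.filter fun b => p ∈ b).filter fun b => (b ∩ O).card = 2).card = q := by
  set Sp := Bl.filter fun b => p ∈ b with hSp
  have hSpcard : Sp.card = q + 1 := h.point_deg p
  have hsec : ((Sp.filter fun b => (b ∩ O).card = 2)).card = q := by
    have : (O.erase p).card = ((Sp.filter fun b => (b ∩ O).card = 2)).card := by
      apply Finset.card_bij (fun x _ => h.blk p x)
      · intro x hx
        have hxO : x ∈ O := Finset.mem_of_mem_erase hx
        have hpx : p ≠ x := fun he => (Finset.ne_of_mem_erase hx) he.symm
        obtain ⟨hbBl, hpb, hxb⟩ := h.blk_spec hpx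
        refine Finset.mem_filter.mpr ⟨Finset.mem_filter.mpr ⟨hbBl, hpb⟩, ?_⟩
        have hsub : ({p, x} : Finset P) ⊆ h.blk p x ∩ O := by
          intro y hy
          rcases Finset.mem_insert.mp hy with rfl | hy
          · exact Finset.mem_inter.mpr ⟨hpb, hp⟩
          · rw [Finset.mem_singleton] at hy
            subst hy
            exact Finset.mem_inter.mpr ⟨hxb, hxO⟩
        have h2 : 2 ≤ (h.blk p x ∩ O).card := by
          calc 2 = ({p, x} : Finset P).card := by rw [Finset.card_insert_of_notMem (by simpa using hpx), Finset.card_singleton]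
          _ ≤ _ := Finset.card_le_card hsub
        have := harc _ hbBl
        omega
      · intro x hx y hy hxy
        by_contra hne
        have hxO : x ∈ O := Finset.mem_of_mem_erase hx
        have hyO : y ∈ O := Finset.mem_of_mem_erase hy
        have hpx : p ≠ x := fun he => (Finset.ne_of_mem_erase hx) he.symm
        have hpy : p ≠ y := fun he => (Finset.ne_of_mem_erase hy) he.symm
        obtain ⟨hbBl, hpb, hxb⟩ := h.blk_spec hpx
        obtain ⟨hbBl', hpb', hyb⟩ := h.blk_spec hpy
        have hsub : ({p, x, y} : Finset P) ⊆ h.blk p x ∩ O := by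
          intro z hz
          simp only [Finset.mem_insert, Finset.mem_singleton] at hz
          rcases hz with rfl | rfl | rfl
          · exact Finset.mem_inter.mpr ⟨hpb, hp⟩
          · exact Finset.mem_inter.mpr ⟨hxb, hxO⟩
          · exact Finset.mem_inter.mpr ⟨hxy ▸ hyb, hyO⟩
        have h3 : ({p, x, y} : Finset P).card = 3 := by
          rw [Finset.card_insert_of_notMem (by simp [hpx, hpy]),
            Finset.card_insert_of_notMem (by simpa using hne), Finset.card_singleton]
        have := Finset.card_le_card hsub
        have := harc _ hbBl
        omega
      · intro b hb
        simp only [Finset.mem_filter, hSp] at hb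
        obtain ⟨⟨hbBl, hpb⟩, hb2⟩ := hb
        have hpbo : p ∈ b ∩ O := Finset.mem_inter.mpr ⟨hpb, hp⟩
        obtain ⟨x, hxbo, hxp⟩ := Finset.exists_mem_ne (s := b ∩ O) (by omega) p
        refine ⟨x, Finset.mem_erase.mpr ⟨hxp, (Finset.mem_inter.mp hxbo).2⟩, ?_⟩
        exact (h.blk_unique (fun he => hxp he.symm) hbBl hpb (Finset.mem_inter.mp hxbo).1).symm
    rw [← this, Finset.card_erase_of_mem hp, hO]
    omega
  have hneg : Sp.filter (fun b => ¬((b ∩ O).card = 1)) = Sp.filter (fun b => (b ∩ O).card = 2) := by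
    apply Finset.filter_congr
    intro b hb
    simp only [Finset.mem_filter, hSp] at hb
    have h1 : 1 ≤ (b ∩ O).card := Finset.card_pos.mpr ⟨p, Finset.mem_inter.mpr ⟨hb.2, hp⟩⟩
    have h2 := harc _ hb.1
    omega
  have hsplit := Finset.card_filter_add_card_filter_not (s := Sp)
      (p := fun b => (b ∩ O).card = 1)
  rw [hneg] at hsplit
  exact ⟨by omega, hsec⟩

lemma tangent_exu {p : P} (hp : p ∈ O) :
    ∃! b, (b ∈ Bl ∧ p ∈ b) ∧ (b ∩ O).card = 1 := by
  have h1 := (h.tangent_at hO harc hp).1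
  obtain ⟨b, hb⟩ := Finset.card_eq_one.mp h1
  have hbmem : b ∈ (Bl.filter fun b => p ∈ b).filter fun b => (b ∩ O).card = 1 := by
    rw [hb]; exact Finset.mem_singleton_self b
  simp only [Finset.mem_filter] at hbmem
  refine ⟨b, ⟨⟨hbmem.1.1, hbmem.1.2⟩, hbmem.2⟩, ?_⟩
  intro c hc
  have : c ∈ (Bl.filter fun b => p ∈ b).filter fun b => (b ∩ O).card = 1 := by
    simp only [Finset.mem_filter]
    exact ⟨⟨hc.1.1, hc.1.2⟩, hc.2⟩
  rw [hb] at this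
  exact Finset.mem_singleton.mp this

/-- The set of tangent blocks to an arc of size `q+1` has exactly `q+1` elements. -/
lemma tangents_card : (Bl.filter fun b => (b ∩ O).card = 1).card = q + 1 := by
  rw [← hO]
  refine (Finset.card_bij (fun p hp => (h.tangent_exu hO harc hp).exists.choose) ?_ ?_ ?_).symm
  · intro p hp
    obtain ⟨⟨hBl, hpb⟩, hcard⟩ := (h.tangent_exu hO harc hp).exists.choose_spec
    exact Finset.mem_filter.mpr ⟨hBl, hcard⟩
  · intro p₁ hp₁ p₂ hp₂ heq
    obtain ⟨⟨hBl1, hpb1⟩, hcard1⟩ := (h.tangent_exu hO harc hp₁).exists.choose_spec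
    obtain ⟨⟨hBl2, hpb2⟩, hcard2⟩ := (h.tangent_exu hO harc hp₂).exists.choose_spec
    have heq' : (h.tangent_exu hO harc hp₁).exists.choose
        = (h.tangent_exu hO harc hp₂).exists.choose := heq
    rw [heq'] at hpb1
    apply Finset.card_le_one.mp (le_of_eq hcard2) p₁ _ p₂ _
    · exact Finset.mem_inter.mpr ⟨hpb1, hp₁⟩
    · exact Finset.mem_inter.mpr ⟨hpb2, hp₂⟩
  · intro b hb
    simp only [Finset.mem_filter] at hb
    obtain ⟨x, hx⟩ := Finset.card_eq_one.mp hb.2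
    have hxmem : x ∈ b ∩ O := by rw [hx]; exact Finset.mem_singleton_self x
    have hxO : x ∈ O := (Finset.mem_inter.mp hxmem).2
    refine ⟨x, hxO, ?_⟩
    show (h.tangent_exu hO harc hxO).exists.choose = b
    exact ((h.tangent_exu hO harc hxO).unique
      (h.tangent_exu hO harc hxO).exists.choose_spec
      ⟨⟨hb.1, (Finset.mem_inter.mp hxmem).1⟩, hb.2⟩)


lemma point_off_sum {p : P} (hp : p ∉ O) :
    ((Bl.filter fun b => p ∈ b).filter fun b => (b ∩ O).card = 1).card
      + 2 * ((Bl.filter fun b => p ∈ b).filter fun b => (b ∩ O).card = 2).card = q + 1 := by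
  set Sp := Bl.filter fun b => p ∈ b with hSp
  have hsum : ∑ b ∈ Sp, (b ∩ O).card = q + 1 := by
    have hdc := sum_filter_card_eq_sum_inter_card Sp O
    have hL : ∀ x ∈ O, (Sp.filter fun c => x ∈ c) = {h.blk p x} := by
      intro x hx
      have hpx : p ≠ x := fun he => hp (he ▸ hx)
      ext c
      simp only [Finset.mem_filter, Finset.mem_singleton, hSp]
      constructor
      · rintro ⟨⟨hcBl, hpc⟩, hxc⟩
        exact h.blk_unique hpx hcBl hpc hxc
      · rintro rfl
        obtain ⟨h1, h2, h3⟩ := h.blk_spec hpx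
        exact ⟨⟨h1, h2⟩, h3⟩
    have hLHS : ∑ x ∈ O, ((Sp.filter fun c => x ∈ c)).card = q + 1 := by
      rw [Finset.sum_congr rfl (fun x hx => by rw [hL x hx, Finset.card_singleton])]
      simp [hO]
    rw [hLHS] at hdc
    have hcomm : ∑ b ∈ Sp, (b ∩ O).card = ∑ c ∈ Sp, (O ∩ c).card :=
      Finset.sum_congr rfl (fun c _ => by rw [Finset.inter_comm])
    rw [hcomm]
    exact hdc.symm
  have hle : ∀ b ∈ Sp, (b ∩ O).card ≤ 2 := fun b hb => harc b (Finset.mem_filter.mp hb).1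
  -- split the sum by values 0,1,2
  have h1 : ∑ b ∈ Sp, (b ∩ O).card
      = (Sp.filter fun b => (b ∩ O).card = 1).card + 2 * (Sp.filter fun b => (b ∩ O).card = 2).card := by
    rw [← Finset.sum_filter_add_sum_filter_not Sp (fun b => (b ∩ O).card = 1)]
    have e1 : ∑ b ∈ Sp.filter (fun b => (b ∩ O).card = 1), (b ∩ O).card
        = (Sp.filter fun b => (b ∩ O).card = 1).card := by
      rw [Finset.sum_congr rfl (fun b hb => (Finset.mem_filter.mp hb).2)]
      simp
    have e2 : ∑ b ∈ Sp.filter (fun b => ¬(b ∩ O).card = 1), (b ∩ O).card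
        = 2 * (Sp.filter fun b => (b ∩ O).card = 2).card := by
      rw [← Finset.sum_filter_add_sum_filter_not (Sp.filter (fun b => ¬(b ∩ O).card = 1))
        (fun b => (b ∩ O).card = 2)]
      have e3 : (Sp.filter (fun b => ¬(b ∩ O).card = 1)).filter (fun b => (b ∩ O).card = 2)
          = Sp.filter fun b => (b ∩ O).card = 2 := by
        ext b
        simp only [Finset.mem_filter]
        constructor
        · rintro ⟨⟨h1, h2⟩, h3⟩
          exact ⟨h1, h3⟩
        · rintro ⟨h1, h3⟩
          exact ⟨⟨h1, by omega⟩, h3⟩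
      have e4 : ∑ b ∈ ((Sp.filter (fun b => ¬(b ∩ O).card = 1)).filter
          (fun b => ¬(b ∩ O).card = 2)), (b ∩ O).card = 0 := by
        apply Finset.sum_eq_zero
        intro b hb
        simp only [Finset.mem_filter] at hb
        have := hle b hb.1.1
        omega
      rw [e3, e4]
      have e5 : ∑ b ∈ Sp.filter (fun b => (b ∩ O).card = 2), (b ∩ O).card
          = 2 * (Sp.filter fun b => (b ∩ O).card = 2).card := by
        rw [Finset.sum_congr rfl (fun b hb => (Finset.mem_filter.mp hb).2)]
        simp [mul_comm]
      rw [e5]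
      omega
    rw [e1, e2]
  omega


lemma odd_point_off (hqe : Even q) {p : P} (hp : p ∉ O) :
    Odd ((Bl.filter fun b => (b ∩ O).card = 1).filter fun c => p ∈ c).card := by
  rw [filter_mem_swap]
  have := h.point_off_sum hO harc hp
  obtain ⟨k, hk⟩ := hqe
  rw [Nat.odd_iff]
  omega

lemma secant_point (hqe : Even q) {b₀ : Finset P} (hb₀ : b₀ ∈ Bl) (hb₀2 : (b₀ ∩ O).card = 2)
    {p : P} (hpb : p ∈ b₀) (hpO : p ∉ O) :
    ((Bl.filter fun b => (b ∩ O).card = 1).filter fun c => p ∈ c).card = 1 := by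
  set TT := Bl.filter fun b => (b ∩ O).card = 1 with hTT
  have htt : TT.card = q + 1 := h.tangents_card hO harc
  set g : P → ℕ := fun x => (TT.filter fun c => x ∈ c).card with hg
  have hsum : ∑ x ∈ b₀, g x = q + 1 := by
    have hone : ∀ t ∈ TT, (b₀ ∩ t).card = 1 := by
      intro t ht
      have htmem := Finset.mem_filter.mp ht
      exact h.inter_card hb₀ htmem.1 (fun he => by rw [he] at hb₀2; omega)
    calc ∑ x ∈ b₀, g x = ∑ t ∈ TT, (b₀ ∩ t).card := sum_filter_card_eq_sum_inter_card TT b₀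
    _ = ∑ _t ∈ TT, 1 := Finset.sum_congr rfl hone
    _ = q + 1 := by rw [Finset.sum_const, smul_eq_mul, htt, mul_one]
  have hsplit : ∑ x ∈ b₀.filter (fun x => x ∈ O), g x
      + ∑ x ∈ b₀.filter (fun x => ¬ x ∈ O), g x = q + 1 := by
    rw [Finset.sum_filter_add_sum_filter_not]
    exact hsum
  have hfirst : ∑ x ∈ b₀.filter (fun x => x ∈ O), g x = 2 := by
    have hcard2 : (b₀.filter (fun x => x ∈ O)).card = 2 := hb₀2
    have hgx : ∀ x ∈ b₀.filter (fun x => x ∈ O), g x = 1 := by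
      intro x hx
      simp only [Finset.mem_filter] at hx
      show ((Bl.filter fun b => (b ∩ O).card = 1).filter fun c => x ∈ c).card = 1
      rw [filter_mem_swap]
      exact (h.tangent_at hO harc hx.2).1
    calc ∑ x ∈ b₀.filter (fun x => x ∈ O), g x = ∑ _x ∈ b₀.filter (fun x => x ∈ O), 1 :=
      Finset.sum_congr rfl hgx
    _ = 2 := by rw [Finset.sum_const, hcard2, smul_eq_mul, mul_one]
  have hoffcard : (b₀.filter (fun x => ¬ x ∈ O)).card = q - 1 := by
    have := Finset.card_filter_add_card_filter_not (s := b₀) (p := fun x => x ∈ O)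
    have hcard2 : (b₀.filter (fun x => x ∈ O)).card = 2 := hb₀2
    have := h.card_block b₀ hb₀
    omega
  have hodd : ∀ x ∈ b₀.filter (fun x => ¬ x ∈ O), 1 ≤ g x := by
    intro x hx
    simp only [Finset.mem_filter] at hx
    have hox := h.odd_point_off hO harc hqe hx.2
    rw [Nat.odd_iff] at hox
    show 1 ≤ ((Bl.filter fun b => (b ∩ O).card = 1).filter fun c => x ∈ c).card
    omega
  have hsecond : ∑ x ∈ b₀.filter (fun x => ¬ x ∈ O), g x = q - 1 := by omega
  have hall : ∀ x ∈ b₀.filter (fun x => ¬ x ∈ O), g x = 1 := by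
    by_contra hcon
    push_neg at hcon
    obtain ⟨x, hx, hgx⟩ := hcon
    have h2 : 2 ≤ g x := by
      have := hodd x hx
      omega
    have hlt : ∑ x ∈ b₀.filter (fun x => ¬ x ∈ O), (1 : ℕ)
        < ∑ x ∈ b₀.filter (fun x => ¬ x ∈ O), g x :=
      Finset.sum_lt_sum hodd ⟨x, hx, by omega⟩
    rw [Finset.sum_const, smul_eq_mul, mul_one, hoffcard] at hlt
    omega
  have hpmem : p ∈ b₀.filter (fun x => ¬ x ∈ O) := Finset.mem_filter.mpr ⟨hpb, hpO⟩
  exact hall p hpmem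

/-- Qvist's theorem: for `q` even, all tangent blocks to a `(q+1)`-arc pass through a
common point, the nucleus, and every block through it is tangent. -/
lemma nucleus (hq2 : 2 ≤ q) (hqe : Even q) :
    ∃ n, n ∉ O ∧ ∀ b ∈ Bl, ((b ∩ O).card = 1 ↔ n ∈ b) := by
  set TT := Bl.filter fun b => (b ∩ O).card = 1 with hTT
  have htt : TT.card = q + 1 := h.tangents_card hO harc
  set g : P → ℕ := fun x => (TT.filter fun c => x ∈ c).card with hg
  -- dichotomy for points off O
  have hdich : ∀ p ∉ O, g p = 1 ∨ g p = q + 1 := by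
    intro p hp
    have hsum := h.point_off_sum hO harc hp
    rcases Nat.eq_zero_or_pos ((Bl.filter fun b => p ∈ b).filter
        fun b => (b ∩ O).card = 2).card with h0 | hpos
    · right
      show ((Bl.filter fun b => (b ∩ O).card = 1).filter fun c => p ∈ c).card = q + 1
      rw [filter_mem_swap]
      omega
    · obtain ⟨b₀, hb₀⟩ := Finset.card_pos.mp hpos
      simp only [Finset.mem_filter] at hb₀
      left
      exact h.secant_point hO harc hqe hb₀.1.1 hb₀.2 hb₀.1.2 hp
  -- total count over points off O
  have htot : ∑ p ∈ Finset.univ.filter (fun p => ¬ p ∈ O), g p = (q + 1) * q := by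
    have h1 : ∑ p ∈ Finset.univ.filter (fun p => ¬ p ∈ O), g p
        = ∑ t ∈ TT, ((Finset.univ.filter (fun p => ¬ p ∈ O)) ∩ t).card := by
      rw [hg]
      exact sum_filter_card_eq_sum_inter_card TT _
    have hq' : ∀ t ∈ TT, ((Finset.univ.filter (fun p => ¬ p ∈ O)) ∩ t).card = q := by
      intro t ht
      have htmem := Finset.mem_filter.mp ht
      have hinter : (Finset.univ.filter (fun p => ¬ p ∈ O)) ∩ t = t \ O := by
        ext x
        simp only [Finset.mem_sdiff, Finset.mem_inter, Finset.mem_filter, Finset.mem_univ,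
          true_and]
        tauto
      rw [hinter]
      have hci := Finset.card_inter_add_card_sdiff t O
      have := h.card_block t htmem.1
      omega
    rw [h1, Finset.sum_congr rfl hq', Finset.sum_const, smul_eq_mul, htt]
  -- count points with g = q+1
  have hoffcard : (Finset.univ.filter (fun p => ¬ p ∈ O)).card = q ^ 2 := by
    have hsplit := Finset.card_filter_add_card_filter_not (s := (Finset.univ : Finset P))
      (p := fun p => p ∈ O)
    have hOeq : Finset.univ.filter (fun p : P => p ∈ O) = O := by
      ext x; simp
    have hcu : (Finset.univ : Finset P).card = q ^ 2 + q + 1 := by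
      rw [Finset.card_univ, h.card_pts]
    rw [hOeq, hO] at hsplit
    omega
  set K := (Finset.univ.filter (fun p => ¬ p ∈ O)).filter (fun p => g p = q + 1) with hK
  have hKcard : K.card = 1 := by
    have hsplit := Finset.card_filter_add_card_filter_not
      (s := Finset.univ.filter (fun p => ¬ p ∈ O)) (p := fun p => g p = q + 1)
    have hsum2 : ∑ p ∈ Finset.univ.filter (fun p => ¬ p ∈ O), g p
        = K.card * (q + 1)
          + ((Finset.univ.filter (fun p => ¬ p ∈ O)).filter (fun p => ¬ g p = q + 1)).card := by
      rw [← Finset.sum_filter_add_sum_filter_not (Finset.univ.filter (fun p => ¬ p ∈ O))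
        (fun p => g p = q + 1)]
      congr 1
      · rw [← hK]
        have : ∀ p ∈ K, g p = q + 1 := fun p hp => (Finset.mem_filter.mp hp).2
        rw [Finset.sum_congr rfl this, Finset.sum_const, smul_eq_mul]
      · have : ∀ p ∈ (Finset.univ.filter (fun p => ¬ p ∈ O)).filter (fun p => ¬ g p = q + 1),
            g p = 1 := by
          intro p hp
          simp only [Finset.mem_filter, Finset.mem_univ, true_and] at hp
          rcases hdich p hp.1 with h1 | h2
          · exact h1
          · exact absurd h2 hp.2
        rw [Finset.sum_congr rfl this, Finset.sum_const, smul_eq_mul, mul_one]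
    rw [htot] at hsum2
    have hKle : K.card + ((Finset.univ.filter (fun p => ¬ p ∈ O)).filter
        (fun p => ¬ g p = q + 1)).card = q ^ 2 := by
      rw [hK]
      omega
    have hKq : K.card * q = 1 * q := by nlinarith [hsum2, hKle]
    exact Nat.eq_of_mul_eq_mul_right (by omega) hKq
  obtain ⟨n, hn⟩ := Finset.card_eq_one.mp hKcard
  have hnK : n ∈ K := by rw [hn]; exact Finset.mem_singleton_self n
  rw [hK] at hnK
  simp only [Finset.mem_filter, Finset.mem_univ, true_and] at hnK
  obtain ⟨hnO, hgn⟩ := hnK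
  have hsub1 : TT.filter (fun c => n ∈ c) ⊆ TT := Finset.filter_subset _ _
  have hTTn_TT : TT.filter (fun c => n ∈ c) = TT := by
    apply Finset.eq_of_subset_of_card_le hsub1
    show TT.card ≤ g n
    rw [htt, hgn]
  have hsub2 : TT.filter (fun c => n ∈ c) ⊆ Bl.filter (fun b => n ∈ b) := by
    rw [hTT, filter_mem_swap]
    exact Finset.filter_subset _ _
  have hTTn_Bn : TT.filter (fun c => n ∈ c) = Bl.filter (fun b => n ∈ b) := by
    apply Finset.eq_of_subset_of_card_le hsub2
    show (Bl.filter (fun b => n ∈ b)).card ≤ g n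
    rw [h.point_deg n, hgn]
  refine ⟨n, hnO, fun b hb => ⟨fun h1 => ?_, fun h2 => ?_⟩⟩
  · have : b ∈ TT := Finset.mem_filter.mpr ⟨hb, h1⟩
    rw [← hTTn_TT] at this
    exact (Finset.mem_filter.mp this).2
  · have : b ∈ Bl.filter (fun b => n ∈ b) := Finset.mem_filter.mpr ⟨hb, h2⟩
    rw [← hTTn_Bn] at this
    have := (Finset.mem_filter.mp this).1
    rw [hTT] at this
    exact (Finset.mem_filter.mp this).2

end Arc
end PD

section Inst

variable {q : ℕ} {L : Finset (Finset P)} (hq : 2 ≤ q) (hL : IsProjectivePlane q L)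
include hq hL

lemma pp_avoid (p : P) : ∃ ℓ ∈ L, p ∉ ℓ := by
  obtain ⟨a, b, c, d, hab, hac, had, hbc, hbd, hcd, hno3⟩ := hL.nondeg
  -- helper: a line containing two of the four does not contain a third
  have key : ∀ x y z : P, x ≠ y → x ≠ z → y ≠ z →
      x ∈ ({a, b, c, d} : Finset P) → y ∈ ({a, b, c, d} : Finset P) →
      z ∈ ({a, b, c, d} : Finset P) →
      ∀ ℓ ∈ L, x ∈ ℓ → y ∈ ℓ → z ∉ ℓ := by
    intro x y z hxy hxz hyz hx hy hz ℓ hℓ hxℓ hyℓ hzℓ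
    have hsub : ({x, y, z} : Finset P) ⊆ ℓ ∩ ({a, b, c, d} : Finset P) := by
      intro w hw
      simp only [Finset.mem_insert, Finset.mem_singleton] at hw
      rcases hw with rfl | rfl | rfl
      · exact Finset.mem_inter.mpr ⟨hxℓ, hx⟩
      · exact Finset.mem_inter.mpr ⟨hyℓ, hy⟩
      · exact Finset.mem_inter.mpr ⟨hzℓ, hz⟩
    have h3 : ({x, y, z} : Finset P).card = 3 := by
      rw [Finset.card_insert_of_notMem (by simp [hxy, hxz]),
        Finset.card_insert_of_notMem (by simpa using hyz), Finset.card_singleton]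
    have := Finset.card_le_card hsub
    have := hno3 ℓ hℓ
    omega
  obtain ⟨lab, ⟨hlabL, halab, hblab⟩, _⟩ := hL.exists_unique_line a b hab
  obtain ⟨lcd, ⟨hlcdL, hclcd, hdlcd⟩, _⟩ := hL.exists_unique_line c d hcd
  obtain ⟨lac, ⟨hlacL, halac, hclac⟩, _⟩ := hL.exists_unique_line a c hac
  by_cases h1 : p ∈ lab
  · by_cases h2 : p ∈ lcd
    · refine ⟨lac, hlacL, fun h3 => ?_⟩
      -- p ∈ lab ∩ lcd ∩ lac
      have hanotcd : a ∉ lcd := key c d a hcd (Ne.symm hac) (Ne.symm had)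
        (by simp) (by simp) (by simp) lcd hlcdL hclcd hdlcd
      have hpa : p ≠ a := fun he => hanotcd (he ▸ h2)
      have hcnotab : c ∉ lab := key a b c hab hac hbc (by simp) (by simp) (by simp) lab hlabL halab hblab
      -- lab and lac both contain p and a
      obtain ⟨m, _, hm⟩ := hL.exists_unique_line p a hpa
      have e1 : lab = m := hm lab ⟨hlabL, h1, halab⟩
      have e2 : lac = m := hm lac ⟨hlacL, h3, halac⟩
      rw [← e2] at e1
      exact hcnotab (e1 ▸ hclac)
    · exact ⟨lcd, hlcdL, h2⟩
  · exact ⟨lab, hlabL, h1⟩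

lemma pp_point_deg (p : P) : (L.filter fun ℓ => p ∈ ℓ).card = q + 1 := by
  obtain ⟨ℓ₀, hℓ₀L, hpℓ₀⟩ := pp_avoid hq hL p
  have : (L.filter fun ℓ => p ∈ ℓ).card = ℓ₀.card := by
    apply Finset.card_bij (fun m hm =>
      (hL.exists_unique_point m (Finset.mem_filter.mp hm).1 ℓ₀ hℓ₀L
        (fun he => hpℓ₀ (he ▸ (Finset.mem_filter.mp hm).2))).exists.choose)
    · intro m hm
      exact (hL.exists_unique_point m (Finset.mem_filter.mp hm).1 ℓ₀ hℓ₀L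
        (fun he => hpℓ₀ (he ▸ (Finset.mem_filter.mp hm).2))).exists.choose_spec.2
    · intro m₁ hm₁ m₂ hm₂ heq
      have hm₁' := Finset.mem_filter.mp hm₁
      have hm₂' := Finset.mem_filter.mp hm₂
      have hne₁ : m₁ ≠ ℓ₀ := fun he => hpℓ₀ (he ▸ hm₁'.2)
      have hne₂ : m₂ ≠ ℓ₀ := fun he => hpℓ₀ (he ▸ hm₂'.2)
      have hs₁ := (hL.exists_unique_point m₁ hm₁'.1 ℓ₀ hℓ₀L hne₁).exists.choose_spec
      have hs₂ := (hL.exists_unique_point m₂ hm₂'.1 ℓ₀ hℓ₀L hne₂).exists.choose_spec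
      have heq' : (hL.exists_unique_point m₁ hm₁'.1 ℓ₀ hℓ₀L hne₁).exists.choose
          = (hL.exists_unique_point m₂ hm₂'.1 ℓ₀ hℓ₀L hne₂).exists.choose := heq
      rw [← heq'] at hs₂
      have hxp : p ≠ (hL.exists_unique_point m₁ hm₁'.1 ℓ₀ hℓ₀L hne₁).exists.choose :=
        fun he => hpℓ₀ (he ▸ hs₁.2)
      obtain ⟨m, _, hm⟩ := hL.exists_unique_line p _ hxp
      exact (hm m₁ ⟨hm₁'.1, hm₁'.2, hs₁.1⟩).trans (hm m₂ ⟨hm₂'.1, hm₂'.2, hs₂.1⟩).symm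
    · intro x hx
      have hxp : p ≠ x := fun he => hpℓ₀ (he ▸ hx)
      obtain ⟨m, ⟨hmL, hpm, hxm⟩, hm⟩ := hL.exists_unique_line p x hxp
      have hmf : m ∈ L.filter fun ℓ => p ∈ ℓ := Finset.mem_filter.mpr ⟨hmL, hpm⟩
      refine ⟨m, hmf, ?_⟩
      have hne : m ≠ ℓ₀ := fun he => hpℓ₀ (he ▸ hpm)
      exact ((hL.exists_unique_point m hmL ℓ₀ hℓ₀L hne).unique
        (hL.exists_unique_point m hmL ℓ₀ hℓ₀L hne).exists.choose_spec ⟨hxm, hx⟩)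
  rw [this, hL.card_line ℓ₀ hℓ₀L]

lemma pp_card_pts : Fintype.card P = q ^ 2 + q + 1 := by
  obtain ⟨a, b, c, d, hab, _⟩ := hL.nondeg
  set Sa := L.filter fun ℓ => a ∈ ℓ with hSa
  have hSacard : Sa.card = q + 1 := pp_point_deg hq hL a
  have hdisj : ∀ ℓ₁ ∈ Sa, ∀ ℓ₂ ∈ Sa, ℓ₁ ≠ ℓ₂ → Disjoint (ℓ₁.erase a) (ℓ₂.erase a) := by
    intro ℓ₁ h₁ ℓ₂ h₂ hne
    rw [Finset.disjoint_left]
    intro x hx₁ hx₂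
    have hxa : a ≠ x := fun he => (Finset.ne_of_mem_erase hx₁) he.symm
    simp only [hSa, Finset.mem_filter] at h₁ h₂
    exact hne (ExistsUnique.unique (hL.exists_unique_line a x hxa)
      ⟨h₁.1, h₁.2, Finset.mem_of_mem_erase hx₁⟩ ⟨h₂.1, h₂.2, Finset.mem_of_mem_erase hx₂⟩)
  have hcover : insert a (Sa.biUnion fun ℓ => ℓ.erase a) = Finset.univ := by
    apply Finset.eq_univ_of_forall
    intro x
    by_cases hxa : x = a
    · subst hxa
      exact Finset.mem_insert_self x _
    · apply Finset.mem_insert_of_mem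
      obtain ⟨ℓ, ⟨hℓL, haℓ, hxℓ⟩, _⟩ := hL.exists_unique_line a x (fun he => hxa he.symm)
      exact Finset.mem_biUnion.mpr ⟨ℓ, Finset.mem_filter.mpr ⟨hℓL, haℓ⟩,
        Finset.mem_erase.mpr ⟨hxa, hxℓ⟩⟩
  have hanotin : a ∉ Sa.biUnion fun ℓ => ℓ.erase a := by
    rw [Finset.mem_biUnion]
    rintro ⟨ℓ, _, hmem⟩
    exact (Finset.ne_of_mem_erase hmem) rfl
  have hbucard : (Sa.biUnion fun ℓ => ℓ.erase a).card = (q + 1) * q := by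
    rw [Finset.card_biUnion hdisj]
    have : ∀ ℓ ∈ Sa, (ℓ.erase a).card = q := by
      intro ℓ hℓ
      simp only [hSa, Finset.mem_filter] at hℓ
      rw [Finset.card_erase_of_mem hℓ.2, hL.card_line ℓ hℓ.1]
      omega
    rw [Finset.sum_congr rfl this, Finset.sum_const, smul_eq_mul, hSacard]
  have : Fintype.card P = (insert a (Sa.biUnion fun ℓ => ℓ.erase a)).card := by
    rw [hcover, Finset.card_univ]
  rw [this, Finset.card_insert_of_notMem hanotin, hbucard]
  ring

lemma pp_pd : PD q L :=
  ⟨hL.exists_unique_line, hL.card_line, pp_point_deg hq hL, pp_card_pts hq hL⟩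

end Inst


omit [Fintype P] in
lemma sum_sum_mem (S : Finset (Finset P)) (f : P → ℕ) [Fintype P] :
    ∑ c ∈ S, ∑ p ∈ c, f p = ∑ p : P, (S.filter fun c => p ∈ c).card * f p := by
  have e1 : ∀ c ∈ S, ∑ p ∈ c, f p = ∑ p : P, if p ∈ c then f p else 0 := by
    intro c _
    rw [Finset.sum_ite_mem, Finset.univ_inter]
  rw [Finset.sum_congr rfl e1, Finset.sum_comm]
  congr 1
  ext p
  rw [← Finset.sum_filter, Finset.sum_const, smul_eq_mul]

section Bundle

variable {q : ℕ} {L B : Finset (Finset P)} (hq : 2 ≤ q) (hL : IsProjectivePlane q L)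
  (hB : IsProjectiveBundle q L B)
include hq hL hB

lemma bundle_point_deg (p : P) : (B.filter fun o => p ∈ o).card = q + 1 := by
  have hcardP : Fintype.card P = q ^ 2 + q + 1 := pp_card_pts hq hL
  have hcardB : B.card = q ^ 2 + q + 1 := hB.1
  set t : P → ℕ := fun x => (B.filter fun o => x ∈ o).card with ht
  have hS1 : ∑ x : P, t x = (q ^ 2 + q + 1) * (q + 1) := by
    rw [ht, sum_filter_card_univ B]
    have : ∀ o ∈ B, o.card = q + 1 := fun o ho => (hB.2.1 o ho).1
    rw [Finset.sum_congr rfl this, Finset.sum_const, smul_eq_mul, hcardB]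
  have hS2 : ∑ x : P, t x * t x = (q ^ 2 + q + 1) * (q + 1) + (q ^ 2 + q + 1) * (q ^ 2 + q) := by
    have e1 : ∑ o ∈ B, ∑ x ∈ o, t x = ∑ x : P, t x * t x := by
      rw [sum_sum_mem B t]
    have e2 : ∀ o ∈ B, ∑ x ∈ o, t x = (q + 1) + (q ^ 2 + q) := by
      intro o ho
      rw [sum_filter_card_eq_sum_inter_card B o, ← Finset.add_sum_erase B _ ho]
      congr 1
      · rw [Finset.inter_self, (hB.2.1 o ho).1]
      · have h1 : ∀ c ∈ B.erase o, (o ∩ c).card = 1 := by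
          intro c hc
          rw [Finset.inter_comm]
          exact hB.2.2 c (Finset.mem_of_mem_erase hc) o ho (Finset.ne_of_mem_erase hc)
        rw [Finset.sum_congr rfl h1, Finset.sum_const, smul_eq_mul, mul_one,
          Finset.card_erase_of_mem ho, hcardB]
        omega
    rw [← e1, Finset.sum_congr rfl e2, Finset.sum_const, smul_eq_mul, hcardB]
    ring
  have hZ : ∑ x : P, ((t x : ℤ) - (q + 1)) ^ 2 = 0 := by
    have expand : ∀ x ∈ Finset.univ, ((t x : ℤ) - (q + 1)) ^ 2
        = (t x : ℤ) * t x - 2 * (q + 1) * ((t x : ℤ)) + (q + 1) ^ 2 := by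
      intro x _; ring
    have c1 : ∑ x : P, (t x : ℤ) * t x
        = ((q : ℤ) ^ 2 + q + 1) * (q + 1) + ((q : ℤ) ^ 2 + q + 1) * ((q : ℤ) ^ 2 + q) := by
      exact_mod_cast congrArg (Nat.cast : ℕ → ℤ) hS2
    have c2 : ∑ x : P, (t x : ℤ) = ((q : ℤ) ^ 2 + q + 1) * (q + 1) := by
      exact_mod_cast congrArg (Nat.cast : ℕ → ℤ) hS1
    rw [Finset.sum_congr rfl expand, Finset.sum_add_distrib, Finset.sum_sub_distrib,
      ← Finset.mul_sum, Finset.sum_const, Finset.card_univ, hcardP, c1, c2]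
    push_cast
    ring
  have hterm : ((t p : ℤ) - (q + 1)) ^ 2 = 0 := by
    have := (Finset.sum_eq_zero_iff_of_nonneg (fun x _ => sq_nonneg ((t x : ℤ) - (q + 1)))).mp
      hZ p (Finset.mem_univ p)
    exact this
  have : (t p : ℤ) = (q + 1 : ℤ) := by
    have := pow_eq_zero_iff (n := 2) (by omega) |>.mp hterm
    linarith [this]
  exact_mod_cast this

lemma bundle_two_pts (x y : P) (hxy : x ≠ y) : ∃! o, o ∈ B ∧ x ∈ o ∧ y ∈ o := by
  have hcardP : Fintype.card P = q ^ 2 + q + 1 := pp_card_pts hq hL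
  set Sx := B.filter fun o => x ∈ o with hSx
  have hSxcard : Sx.card = q + 1 := bundle_point_deg hq hL hB x
  have hdisj : ∀ o₁ ∈ Sx, ∀ o₂ ∈ Sx, o₁ ≠ o₂ → Disjoint (o₁.erase x) (o₂.erase x) := by
    intro o₁ h₁ o₂ h₂ hne
    rw [Finset.disjoint_left]
    intro z hz₁ hz₂
    simp only [hSx, Finset.mem_filter] at h₁ h₂
    have hsub : ({x, z} : Finset P) ⊆ o₁ ∩ o₂ := by
      intro w hw
      simp only [Finset.mem_insert, Finset.mem_singleton] at hw
      rcases hw with rfl | rfl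
      · exact Finset.mem_inter.mpr ⟨h₁.2, h₂.2⟩
      · exact Finset.mem_inter.mpr ⟨Finset.mem_of_mem_erase hz₁, Finset.mem_of_mem_erase hz₂⟩
    have h2 : ({x, z} : Finset P).card = 2 := by
      rw [Finset.card_insert_of_notMem (by simpa using
        (fun he => (Finset.ne_of_mem_erase hz₁) he.symm : x ≠ z)), Finset.card_singleton]
    have hc := Finset.card_le_card hsub
    rw [hB.2.2 o₁ h₁.1 o₂ h₂.1 hne] at hc
    omega
  have hbucard : (Sx.biUnion fun o => o.erase x).card = (q + 1) * q := by
    rw [Finset.card_biUnion hdisj]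
    have : ∀ o ∈ Sx, (o.erase x).card = q := by
      intro o ho
      simp only [hSx, Finset.mem_filter] at ho
      rw [Finset.card_erase_of_mem ho.2, (hB.2.1 o ho.1).1]
      omega
    rw [Finset.sum_congr rfl this, Finset.sum_const, smul_eq_mul, hSxcard]
  have hxnotin : x ∉ Sx.biUnion fun o => o.erase x := by
    rw [Finset.mem_biUnion]
    rintro ⟨o, _, hmem⟩
    exact (Finset.ne_of_mem_erase hmem) rfl
  have hcardins : (insert x (Sx.biUnion fun o => o.erase x)).card = Fintype.card P := by
    rw [Finset.card_insert_of_notMem hxnotin, hbucard, hcardP]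
    ring
  have huniv : insert x (Sx.biUnion fun o => o.erase x) = Finset.univ :=
    Finset.eq_univ_of_card _ hcardins
  have hymem : y ∈ insert x (Sx.biUnion fun o => o.erase x) := by
    rw [huniv]; exact Finset.mem_univ y
  rcases Finset.mem_insert.mp hymem with he | hy
  · exact absurd he.symm hxy
  · obtain ⟨o, hoSx, hyo⟩ := Finset.mem_biUnion.mp hy
    simp only [hSx, Finset.mem_filter] at hoSx
    refine ⟨o, ⟨hoSx.1, hoSx.2, Finset.mem_of_mem_erase hyo⟩, ?_⟩
    rintro o' ⟨ho'B, hxo', hyo'⟩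
    by_contra hne
    have hsub : ({x, y} : Finset P) ⊆ o' ∩ o := by
      intro w hw
      simp only [Finset.mem_insert, Finset.mem_singleton] at hw
      rcases hw with rfl | rfl
      · exact Finset.mem_inter.mpr ⟨hxo', hoSx.2⟩
      · exact Finset.mem_inter.mpr ⟨hyo', Finset.mem_of_mem_erase hyo⟩
    have h2 : ({x, y} : Finset P).card = 2 := by
      rw [Finset.card_insert_of_notMem (by simpa using hxy), Finset.card_singleton]
    have hc := Finset.card_le_card hsub
    rw [hB.2.2 o' ho'B o hoSx.1 hne] at hc
    omega

lemma bundle_pd : PD q B :=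
  ⟨bundle_two_pts hq hL hB, fun o ho => (hB.2.1 o ho).1, bundle_point_deg hq hL hB,
    pp_card_pts hq hL⟩

end Bundle



/-- For `q ≥ 2` even: if `r` lines `L' ⊆ L` and `s` ovals `O' ⊆ B` with
`r + s = q + 2` cover every point an even number of times, then either `(r, s) = (q+2, 0)`
and `L'` is a dual hyperoval (every point lies on exactly 0 or 2 of its lines), or
`(r, s) = (0, q+2)` and every point lies on exactly 0 or 2 of the ovals of `O'`. -/
theorem statement_15 (q : ℕ) (hq : 2 ≤ q) (heven : Even q) (P : Type) [Fintype P] [DecidableEq P]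
    (L : Finset (Finset P)) (hL : IsProjectivePlane q L)
    (B : Finset (Finset P)) (hB : IsProjectiveBundle q L B)
    (L' O' : Finset (Finset P)) (hL' : L' ⊆ L) (hO' : O' ⊆ B)
    (hcard : L'.card + O'.card = q + 2)
    (hcover : ∀ p : P,
      Even ((L'.filter fun ℓ => p ∈ ℓ).card + (O'.filter fun o => p ∈ o).card)) :
    (L'.card = q + 2 ∧ O' = ∅ ∧
      ∀ p : P, (L'.filter fun ℓ => p ∈ ℓ).card = 0 ∨ (L'.filter fun ℓ => p ∈ ℓ).card = 2) ∨
    (O'.card = q + 2 ∧ L' = ∅ ∧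
      ∀ p : P, (O'.filter fun o => p ∈ o).card = 0 ∨ (O'.filter fun o => p ∈ o).card = 2) := by
  classical
  have hPDL : PD q L := pp_pd hq hL
  have hPDB : PD q B := bundle_pd hq hL hB
  have hq2 : q % 2 = 0 := Nat.even_iff.mp heven
  have hnP : Nonempty P := by
    have := hPDL.card_pts
    have : 0 < Fintype.card P := by omega
    exact Fintype.card_pos_iff.mp this
  set lam : P → ℕ := fun p => (L'.filter fun ℓ => p ∈ ℓ).card with hlam
  set mu : P → ℕ := fun p => (O'.filter fun o => p ∈ o).card with hmu
  -- oval nuclei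
  have hnucO : ∀ O, O ∈ B → ∃ n, n ∉ O ∧ ∀ ℓ ∈ L, ((ℓ ∩ O).card = 1 ↔ n ∈ ℓ) := by
    intro O hO
    exact hPDL.nucleus (hB.2.1 O hO).1 (fun ℓ hℓ => (hB.2.1 O hO).2 ℓ hℓ) hq heven
  choose! no hno1 hno2 using hnucO
  -- line nuclei (w.r.t. the bundle)
  have hnucL : ∀ ℓ, ℓ ∈ L → ∃ n, n ∉ ℓ ∧ ∀ o ∈ B, ((o ∩ ℓ).card = 1 ↔ n ∈ o) := by
    intro ℓ hℓ
    exact hPDB.nucleus (hL.card_line ℓ hℓ)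
      (fun o ho => by rw [Finset.inter_comm]; exact (hB.2.1 o ho).2 ℓ hℓ) hq heven
  choose! nl hnl1 hnl2 using hnucL
  -- injectivity of the oval nucleus map
  have hinjO : Set.InjOn no ↑B := by
    intro O₁ h₁ O₂ h₂ heq
    by_contra hne
    obtain ⟨x, hx⟩ := Finset.card_eq_one.mp (hB.2.2 O₁ h₁ O₂ h₂ hne)
    have hxm : x ∈ O₁ ∩ O₂ := by rw [hx]; exact Finset.mem_singleton_self x
    have hx₁ : x ∈ O₁ := (Finset.mem_inter.mp hxm).1
    have hx₂ : x ∈ O₂ := (Finset.mem_inter.mp hxm).2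
    have hnx : no O₁ ≠ x := fun he => hno1 O₁ h₁ (he ▸ hx₁)
    obtain ⟨ℓ, ⟨hℓL, hnℓ, hxℓ⟩, _⟩ := hL.exists_unique_line (no O₁) x hnx
    have t₁ : (O₁ ∩ ℓ).card = 1 := by
      rw [Finset.inter_comm]; exact (hno2 O₁ h₁ ℓ hℓL).mpr hnℓ
    have t₂ : (O₂ ∩ ℓ).card = 1 := by
      rw [Finset.inter_comm]; exact (hno2 O₂ h₂ ℓ hℓL).mpr (heq ▸ hnℓ)
    have harcℓ : ∀ o ∈ B, (o ∩ ℓ).card ≤ 2 := fun o ho => by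
      rw [Finset.inter_comm]; exact (hB.2.1 o ho).2 ℓ hℓL
    have hexu := hPDB.tangent_exu (hL.card_line ℓ hℓL) harcℓ hxℓ
    exact hne (hexu.unique ⟨⟨h₁, hx₁⟩, t₁⟩ ⟨⟨h₂, hx₂⟩, t₂⟩)
  have hsurjO : ∀ p : P, ∃ O ∈ B, no O = p := by
    have himg : Finset.image no B = Finset.univ := by
      apply Finset.eq_univ_of_card
      rw [Finset.card_image_of_injOn hinjO, hB.1, hPDL.card_pts]
    intro p
    have : p ∈ Finset.image no B := by rw [himg]; exact Finset.mem_univ p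
    obtain ⟨O, hO, hOp⟩ := Finset.mem_image.mp this
    exact ⟨O, hO, hOp⟩
  -- injectivity of the line nucleus map
  have hinjL : Set.InjOn nl ↑L := by
    intro ℓ₁ h₁ ℓ₂ h₂ heq
    by_contra hne
    obtain ⟨x, hx⟩ := Finset.card_eq_one.mp (hPDL.inter_card h₁ h₂ hne)
    have hxm : x ∈ ℓ₁ ∩ ℓ₂ := by rw [hx]; exact Finset.mem_singleton_self x
    have hx₁ : x ∈ ℓ₁ := (Finset.mem_inter.mp hxm).1
    have hx₂ : x ∈ ℓ₂ := (Finset.mem_inter.mp hxm).2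
    have hnx : nl ℓ₁ ≠ x := fun he => hnl1 ℓ₁ h₁ (he ▸ hx₁)
    obtain ⟨O, ⟨hOB, hnO, hxO⟩, _⟩ := bundle_two_pts hq hL hB (nl ℓ₁) x hnx
    have t₁ : (ℓ₁ ∩ O).card = 1 := by
      rw [Finset.inter_comm]; exact (hnl2 ℓ₁ h₁ O hOB).mpr hnO
    have t₂ : (ℓ₂ ∩ O).card = 1 := by
      rw [Finset.inter_comm]; exact (hnl2 ℓ₂ h₂ O hOB).mpr (heq ▸ hnO)
    have harcO : ∀ b ∈ L, (b ∩ O).card ≤ 2 := fun b hb => (hB.2.1 O hOB).2 b hb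
    have hexu := hPDL.tangent_exu (hB.2.1 O hOB).1 harcO hxO
    exact hne (hexu.unique ⟨⟨h₁, hx₁⟩, t₁⟩ ⟨⟨h₂, hx₂⟩, t₂⟩)
  have hsurjL : ∀ p : P, ∃ ℓ ∈ L, nl ℓ = p := by
    have himg : Finset.image nl L = Finset.univ := by
      apply Finset.eq_univ_of_card
      rw [Finset.card_image_of_injOn hinjL, hPDL.card_Bl, hPDL.card_pts]
    intro p
    have : p ∈ Finset.image nl L := by rw [himg]; exact Finset.mem_univ p
    obtain ⟨ℓ, hℓ, hℓp⟩ := Finset.mem_image.mp this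
    exact ⟨ℓ, hℓ, hℓp⟩
  -- parity of lam
  have key1 : ∀ p : P, lam p % 2 = O'.card % 2 := by
    intro p
    obtain ⟨O, hOB, rfl⟩ := hsurjO p
    have hEsum : (∑ x ∈ O, (lam x + mu x)) % 2 = 0 :=
      Nat.even_iff.mp (Finset.even_sum (f := fun x => lam x + mu x) (fun x _ => hcover x))
    rw [Finset.sum_add_distrib] at hEsum
    have e2 : ∑ x ∈ O, lam x = ∑ ℓ ∈ L', (O ∩ ℓ).card :=
      sum_filter_card_eq_sum_inter_card L' O
    have e3 : ∑ x ∈ O, mu x = ∑ o ∈ O', (O ∩ o).card :=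
      sum_filter_card_eq_sum_inter_card O' O
    have e4 : (∑ o ∈ O', (O ∩ o).card) % 2 = O'.card % 2 := by
      by_cases hOO' : O ∈ O'
      · rw [← Finset.add_sum_erase O' _ hOO']
        have h1 : ∀ o ∈ O'.erase O, (O ∩ o).card = 1 := fun o ho => by
          rw [Finset.inter_comm]
          exact hB.2.2 o (hO' (Finset.mem_of_mem_erase ho)) O hOB (Finset.ne_of_mem_erase ho)
        rw [Finset.sum_congr rfl h1, Finset.sum_const, smul_eq_mul, mul_one,
          Finset.inter_self, (hB.2.1 O hOB).1, Finset.card_erase_of_mem hOO']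
        have : 1 ≤ O'.card := Finset.card_pos.mpr ⟨O, hOO'⟩
        omega
      · have h1 : ∀ o ∈ O', (O ∩ o).card = 1 := fun o ho => by
          rw [Finset.inter_comm]
          exact hB.2.2 o (hO' ho) O hOB (fun he => hOO' (he ▸ ho))
        rw [Finset.sum_congr rfl h1, Finset.sum_const, smul_eq_mul, mul_one]
    have e5 : (∑ ℓ ∈ L', (O ∩ ℓ).card) % 2 = lam (no O) % 2 := by
      have hterm : ∀ ℓ ∈ L', (O ∩ ℓ).card % 2 = (if no O ∈ ℓ then 1 else 0) := by
        intro ℓ hℓ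
        have hℓL : ℓ ∈ L := hL' hℓ
        have hiff := hno2 O hOB ℓ hℓL
        have hbd : (ℓ ∩ O).card ≤ 2 := (hB.2.1 O hOB).2 ℓ hℓL
        rw [Finset.inter_comm]
        by_cases hmem : no O ∈ ℓ
        · rw [if_pos hmem, hiff.mpr hmem]
        · rw [if_neg hmem]
          have : (ℓ ∩ O).card ≠ 1 := fun he => hmem (hiff.mp he)
          omega
      rw [Finset.sum_nat_mod, Finset.sum_congr rfl hterm]
      have : (∑ ℓ ∈ L', if no O ∈ ℓ then 1 else 0) = lam (no O) :=
        (Finset.card_filter _ _).symm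
      rw [this]
    omega
  -- parity of mu
  have key2 : ∀ p : P, mu p % 2 = L'.card % 2 := by
    intro p
    obtain ⟨ℓ, hℓL, rfl⟩ := hsurjL p
    have hEsum : (∑ x ∈ ℓ, (lam x + mu x)) % 2 = 0 :=
      Nat.even_iff.mp (Finset.even_sum (f := fun x => lam x + mu x) (fun x _ => hcover x))
    rw [Finset.sum_add_distrib] at hEsum
    have e2 : ∑ x ∈ ℓ, lam x = ∑ m ∈ L', (ℓ ∩ m).card :=
      sum_filter_card_eq_sum_inter_card L' ℓ
    have e3 : ∑ x ∈ ℓ, mu x = ∑ o ∈ O', (ℓ ∩ o).card :=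
      sum_filter_card_eq_sum_inter_card O' ℓ
    have e4 : (∑ m ∈ L', (ℓ ∩ m).card) % 2 = L'.card % 2 := by
      by_cases hmem : ℓ ∈ L'
      · rw [← Finset.add_sum_erase L' _ hmem]
        have h1 : ∀ m ∈ L'.erase ℓ, (ℓ ∩ m).card = 1 := fun m hm =>
          hPDL.inter_card hℓL (hL' (Finset.mem_of_mem_erase hm))
            (fun he => (Finset.ne_of_mem_erase hm) he.symm)
        rw [Finset.sum_congr rfl h1, Finset.sum_const, smul_eq_mul, mul_one,
          Finset.inter_self, hL.card_line ℓ hℓL, Finset.card_erase_of_mem hmem]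
        have : 1 ≤ L'.card := Finset.card_pos.mpr ⟨ℓ, hmem⟩
        omega
      · have h1 : ∀ m ∈ L', (ℓ ∩ m).card = 1 := fun m hm =>
          hPDL.inter_card hℓL (hL' hm) (fun he => hmem (he ▸ hm))
        rw [Finset.sum_congr rfl h1, Finset.sum_const, smul_eq_mul, mul_one]
    have e5 : (∑ o ∈ O', (ℓ ∩ o).card) % 2 = mu (nl ℓ) % 2 := by
      have hterm : ∀ o ∈ O', (ℓ ∩ o).card % 2 = (if nl ℓ ∈ o then 1 else 0) := by
        intro o ho
        have hoB : o ∈ B := hO' ho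
        have hiff := hnl2 ℓ hℓL o hoB
        have hbd : (ℓ ∩ o).card ≤ 2 := (hB.2.1 o hoB).2 ℓ hℓL
        rw [Finset.inter_comm]
        by_cases hmem : nl ℓ ∈ o
        · rw [if_pos hmem, hiff.mpr hmem]
        · rw [if_neg hmem]
          have : (o ∩ ℓ).card ≠ 1 := fun he => hmem (hiff.mp he)
          rw [Finset.inter_comm] at hbd
          omega
      rw [Finset.sum_nat_mod, Finset.sum_congr rfl hterm]
      have : (∑ o ∈ O', if nl ℓ ∈ o then 1 else 0) = mu (nl ℓ) :=
        (Finset.card_filter _ _).symm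
      rw [this]
    omega
  -- global incidence counts
  have hlamtot : ∑ p : P, lam p = L'.card * (q + 1) := by
    rw [hlam, sum_filter_card_univ L']
    have : ∀ ℓ ∈ L', ℓ.card = q + 1 := fun ℓ hℓ => hL.card_line ℓ (hL' hℓ)
    rw [Finset.sum_congr rfl this, Finset.sum_const, smul_eq_mul]
  have hmutot : ∑ p : P, mu p = O'.card * (q + 1) := by
    rw [hmu, sum_filter_card_univ O']
    have : ∀ o ∈ O', o.card = q + 1 := fun o ho => (hB.2.1 o (hO' ho)).1
    rw [Finset.sum_congr rfl this, Finset.sum_const, smul_eq_mul]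
  rcases Nat.even_or_odd L'.card with hre | hro
  swap
  · -- odd case: contradiction
    exfalso
    have hrmod : L'.card % 2 = 1 := Nat.odd_iff.mp hro
    have hsmod : O'.card % 2 = 1 := by omega
    have hlam1 : ∀ p : P, 1 ≤ lam p := by
      intro p
      have := key1 p
      omega
    have hmu1 : ∀ p : P, 1 ≤ mu p := by
      intro p
      have := key2 p
      omega
    have h1 : Fintype.card P ≤ ∑ p : P, lam p := by
      rw [← Finset.card_univ, Finset.card_eq_sum_ones]
      exact Finset.sum_le_sum (fun p _ => hlam1 p)
    have h2 : Fintype.card P ≤ ∑ p : P, mu p := by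
      rw [← Finset.card_univ, Finset.card_eq_sum_ones]
      exact Finset.sum_le_sum (fun p _ => hmu1 p)
    rw [hlamtot] at h1
    rw [hmutot] at h2
    rw [hPDL.card_pts] at h1 h2
    nlinarith [h1, h2, hcard, hq]
  · -- even case
    have hrmod : L'.card % 2 = 0 := Nat.even_iff.mp hre
    have hsmod : O'.card % 2 = 0 := by omega
    have hlameven : ∀ p : P, lam p % 2 = 0 := fun p => by have := key1 p; omega
    have hmueven : ∀ p : P, mu p % 2 = 0 := fun p => by have := key2 p; omega
    -- sum of lam over a line of L'
    have hlinesum : ∀ ℓ₀ ∈ L', ∑ x ∈ ℓ₀, lam x = (q + 1) + (L'.card - 1) := by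
      intro ℓ₀ h₀
      rw [hlam, sum_filter_card_eq_sum_inter_card L' ℓ₀, ← Finset.add_sum_erase L' _ h₀]
      have h1 : ∀ m ∈ L'.erase ℓ₀, (ℓ₀ ∩ m).card = 1 := fun m hm =>
        hPDL.inter_card (hL' h₀) (hL' (Finset.mem_of_mem_erase hm))
          (fun he => (Finset.ne_of_mem_erase hm) he.symm)
      rw [Finset.sum_congr rfl h1, Finset.sum_const, smul_eq_mul, mul_one,
        Finset.inter_self, hL.card_line ℓ₀ (hL' h₀), Finset.card_erase_of_mem h₀]
    have hovalsum : ∀ O₀ ∈ O', ∑ x ∈ O₀, mu x = (q + 1) + (O'.card - 1) := by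
      intro O₀ h₀
      rw [hmu, sum_filter_card_eq_sum_inter_card O' O₀, ← Finset.add_sum_erase O' _ h₀]
      have h1 : ∀ o ∈ O'.erase O₀, (O₀ ∩ o).card = 1 := fun o ho => by
        rw [Finset.inter_comm]
        exact hB.2.2 o (hO' (Finset.mem_of_mem_erase ho)) O₀ (hO' h₀)
          (Finset.ne_of_mem_erase ho)
      rw [Finset.sum_congr rfl h1, Finset.sum_const, smul_eq_mul, mul_one,
        Finset.inter_self, (hB.2.1 O₀ (hO' h₀)).1, Finset.card_erase_of_mem h₀]
    by_cases hr0 : L'.card = 0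
    · -- all ovals
      right
      have hL'e : L' = ∅ := Finset.card_eq_zero.mp hr0
      have hs : O'.card = q + 2 := by omega
      refine ⟨hs, hL'e, fun p => ?_⟩
      by_cases hmp : mu p = 0
      · exact Or.inl hmp
      · right
        show mu p = 2
        have hpos : 0 < mu p := Nat.pos_of_ne_zero hmp
        obtain ⟨O₀, hO₀⟩ := Finset.card_pos.mp hpos
        have hO₀O' : O₀ ∈ O' := (Finset.mem_filter.mp hO₀).1
        have hpO₀ : p ∈ O₀ := (Finset.mem_filter.mp hO₀).2
        have hsum := hovalsum O₀ hO₀O'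
        rw [hs] at hsum
        have hge : ∀ x ∈ O₀, 2 ≤ mu x := by
          intro x hx
          have h1 : 1 ≤ mu x := Finset.card_pos.mpr ⟨O₀, Finset.mem_filter.mpr ⟨hO₀O', hx⟩⟩
          have := hmueven x
          omega
        by_contra hne2
        have hlt : ∑ x ∈ O₀, (2 : ℕ) < ∑ x ∈ O₀, mu x :=
          Finset.sum_lt_sum hge ⟨p, hpO₀, by have := hmueven p; omega⟩
        rw [Finset.sum_const, smul_eq_mul, (hB.2.1 O₀ (hO' hO₀O')).1, hsum] at hlt
        omega
    · -- r ≥ 1 forces r = q + 2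
      left
      obtain ⟨ℓ₀, hℓ₀⟩ := Finset.card_pos.mp (Nat.pos_of_ne_zero hr0)
      have hge : ∀ x ∈ ℓ₀, 2 ≤ lam x := by
        intro x hx
        have h1 : 1 ≤ lam x := Finset.card_pos.mpr ⟨ℓ₀, Finset.mem_filter.mpr ⟨hℓ₀, hx⟩⟩
        have := hlameven x
        omega
      have hsum := hlinesum ℓ₀ hℓ₀
      have hlb : ∑ x ∈ ℓ₀, (2 : ℕ) ≤ ∑ x ∈ ℓ₀, lam x := Finset.sum_le_sum hge
      rw [Finset.sum_const, smul_eq_mul, hL.card_line ℓ₀ (hL' hℓ₀), hsum] at hlb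
      have hr1 : 1 ≤ L'.card := Nat.pos_of_ne_zero hr0
      have hr : L'.card = q + 2 := by omega
      have hs0 : O'.card = 0 := by omega
      have hO'e : O' = ∅ := Finset.card_eq_zero.mp hs0
      refine ⟨hr, hO'e, fun p => ?_⟩
      by_cases hlp : lam p = 0
      · exact Or.inl hlp
      · right
        show lam p = 2
        have hpos : 0 < lam p := Nat.pos_of_ne_zero hlp
        obtain ⟨ℓ₁, hℓ₁⟩ := Finset.card_pos.mp hpos
        have hℓ₁L' : ℓ₁ ∈ L' := (Finset.mem_filter.mp hℓ₁).1
        have hpℓ₁ : p ∈ ℓ₁ := (Finset.mem_filter.mp hℓ₁).2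
        have hsum1 := hlinesum ℓ₁ hℓ₁L'
        rw [hr] at hsum1
        have hge1 : ∀ x ∈ ℓ₁, 2 ≤ lam x := by
          intro x hx
          have h1 : 1 ≤ lam x := Finset.card_pos.mpr ⟨ℓ₁, Finset.mem_filter.mpr ⟨hℓ₁L', hx⟩⟩
          have := hlameven x
          omega
        by_contra hne2
        have hlt : ∑ x ∈ ℓ₁, (2 : ℕ) < ∑ x ∈ ℓ₁, lam x :=
          Finset.sum_lt_sum hge1 ⟨p, hpℓ₁, by have := hlameven p; omega⟩
        rw [Finset.sum_const, smul_eq_mul, hL.card_line ℓ₁ (hL' hℓ₁L'), hsum1] at hlt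
        omega
end

section
/- Let q ≥ 1 and let H be a binary matrix with q²+q+1 rows and c columns such that every column has exactly q+1 entries equal to 1 and any two distinct columns have at most one common row in which both have entry 1. Then c ≤ q²+q+1. -/
/-- A binary matrix with `q² + q + 1` rows and `c` columns (`q ≥ 1`), each
column of weight exactly `q + 1`, in which any two distinct columns share at most one
common row with entry 1, satisfies `c ≤ q² + q + 1`. -/
theorem statement_17 (q c : ℕ) (hq : 1 ≤ q)
    (M : Matrix (Fin (q ^ 2 + q + 1)) (Fin c) (ZMod 2))
    (hcol : ∀ j, (Finset.univ.filter fun i => M i j ≠ 0).card = q + 1)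
    (hint : ∀ j₁ j₂, j₁ ≠ j₂ →
      (Finset.univ.filter fun i => M i j₁ ≠ 0 ∧ M i j₂ ≠ 0).card ≤ 1) :
    c ≤ q ^ 2 + q + 1 := by
  let n := q ^ 2 + q + 1
  have hn : n = q ^ 2 + q + 1 := rfl
  let S : Fin c → Finset (Fin n) := fun j => Finset.univ.filter fun i => M i j ≠ 0
  have hS : S = fun j => Finset.univ.filter fun i => M i j ≠ 0 := rfl
  -- the offDiags of the supports are pairwise disjoint
  have key : ∀ j₁ j₂ : Fin c, j₁ ≠ j₂ → Disjoint (S j₁).offDiag (S j₂).offDiag := by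
    intro j₁ j₂ hne
    rw [Finset.disjoint_left]
    rintro ⟨a, b⟩ h1 h2
    rw [Finset.mem_offDiag] at h1 h2
    obtain ⟨ha1, hb1, hab⟩ := h1
    obtain ⟨ha2, hb2, -⟩ := h2
    simp only [hS, Finset.mem_filter] at ha1 hb1 ha2 hb2
    have hsub : ({a, b} : Finset (Fin n)) ⊆
        Finset.univ.filter fun i => M i j₁ ≠ 0 ∧ M i j₂ ≠ 0 := by
      intro x hx
      simp only [Finset.mem_insert, Finset.mem_singleton] at hx
      rcases hx with rfl | rfl <;> simp [ha1.2, ha2.2, hb1.2, hb2.2]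
    have h2le : 2 ≤ (Finset.univ.filter fun i => M i j₁ ≠ 0 ∧ M i j₂ ≠ 0).card := by
      calc 2 = ({a, b} : Finset (Fin n)).card := by rw [Finset.card_insert_of_notMem (by simpa using hab), Finset.card_singleton]
        _ ≤ _ := Finset.card_le_card hsub
    have := hint j₁ j₂ hne
    omega
  have hcardU : (Finset.univ.biUnion fun j => (S j).offDiag).card
      = c * ((q + 1) * q) := by
    rw [Finset.card_biUnion (fun j₁ _ j₂ _ h => key j₁ j₂ h)]
    have : ∀ j, (S j).offDiag.card = (q + 1) * q := by
      intro j
      rw [Finset.offDiag_card]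
      have : (S j).card = q + 1 := hcol j
      rw [this]; ring_nf; omega
    simp [this, Finset.sum_const, mul_comm]
  have hle : (Finset.univ.biUnion fun j => (S j).offDiag).card
      ≤ ((Finset.univ : Finset (Fin n)).offDiag).card :=
    Finset.card_le_card (by intro x hx; simp only [Finset.mem_biUnion] at hx
                            obtain ⟨j, -, hj⟩ := hx
                            rw [Finset.mem_offDiag] at hj ⊢
                            exact ⟨Finset.mem_univ _, Finset.mem_univ _, hj.2.2⟩)
  rw [hcardU, Finset.offDiag_card, Finset.card_univ, Fintype.card_fin] at hle
  have hnn : n * n - n = n * ((q + 1) * q) := by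
    have h1 : n * n = n * ((q + 1) * q) + n := by rw [hn]; ring
    omega
  rw [hnn] at hle
  have hpos : 0 < (q + 1) * q := by positivity
  exact Nat.le_of_mul_le_mul_right hle hpos
end

section
/- Let q ≥ 2 be odd, let (P, L) be a finite projective plane of order q, let t ≥ 1, and let B₁, …, B_t be projective bundles in it that are pairwise disjoint (no common oval). Let A be the P × L incidence matrix over F₂ and Mᵢ the P × Bᵢ incidence matrix over F₂. Then the F₂-rank of the block matrix H = (A | M₁ | ⋯ | M_t) equals q²+q; equivalently, its right kernel has F₂-dimension t(q²+q+1) + 1. -/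
section Aux

variable {q : ℕ} {P : Type} [Fintype P] [DecidableEq P] {L : Finset (Finset P)}

instance instMemSub : Membership P {m // m ∈ L} := ⟨fun ℓ p => p ∈ ℓ.1⟩

lemma memSub_iff (p : P) (ℓ : {m // m ∈ L}) : p ∈ ℓ ↔ p ∈ ℓ.1 := Iff.rfl

theorem ppOf' (hL : IsProjectivePlane q L) :
    Nonempty (Configuration.ProjectivePlane P {m // m ∈ L}) := by
  obtain ⟨a, b, c, d, hab, hac, had, hbc, hbd, hcd, hquad⟩ := hL.nondeg
  have htri : ∀ ℓ : {m // m ∈ L}, ∀ x y z : P, x ≠ y → x ≠ z → y ≠ z →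
      x ∈ ({a, b, c, d} : Finset P) → y ∈ ({a, b, c, d} : Finset P) →
      z ∈ ({a, b, c, d} : Finset P) → x ∈ ℓ.1 → y ∈ ℓ.1 → z ∉ ℓ.1 := by
    intro ℓ x y z hxy hxz hyz hx hy hz hxl hyl hzl
    have h3 : ({x, y, z} : Finset P) ⊆ ℓ.1 ∩ {a, b, c, d} := by
      intro w hw
      simp only [Finset.mem_insert, Finset.mem_singleton] at hw
      rcases hw with rfl | rfl | rfl <;> simp [Finset.mem_inter, hxl, hyl, hzl, hx, hy, hz]
    have hc := Finset.card_le_card h3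
    rw [Finset.card_insert_of_notMem (by simp [hxy, hxz]),
        Finset.card_insert_of_notMem (by simp [hyz]), Finset.card_singleton] at hc
    have := hquad ℓ.1 ℓ.2
    omega
  have lineEx : ∀ x y : P, x ≠ y → ∃ ℓ : {m // m ∈ L}, x ∈ ℓ.1 ∧ y ∈ ℓ.1 := by
    intro x y h
    obtain ⟨ℓ, ⟨h1, h2, h3⟩, -⟩ := hL.exists_unique_line x y h
    exact ⟨⟨ℓ, h1⟩, h2, h3⟩
  choose lineF hlineF using lineEx
  have ptU : ∀ (ℓ₁ ℓ₂ : {m // m ∈ L}), ℓ₁ ≠ ℓ₂ → ∀ x y : P,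
      x ∈ ℓ₁.1 → x ∈ ℓ₂.1 → y ∈ ℓ₁.1 → y ∈ ℓ₂.1 → x = y := by
    intro ℓ₁ ℓ₂ hne x y hx1 hx2 hy1 hy2
    obtain ⟨z, -, hz⟩ := hL.exists_unique_point ℓ₁.1 ℓ₁.2 ℓ₂.1 ℓ₂.2
      (fun e => hne (Subtype.ext e))
    exact (hz x ⟨hx1, hx2⟩).trans (hz y ⟨hy1, hy2⟩).symm
  have lineU : ∀ (x y : P) (h : x ≠ y) (ℓ : {m // m ∈ L}), x ∈ ℓ.1 → y ∈ ℓ.1 →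
      ℓ = lineF x y h := by
    intro x y h ℓ hx hy
    obtain ⟨ℓ₀, -, hu⟩ := hL.exists_unique_line x y h
    exact Subtype.ext ((hu ℓ.1 ⟨ℓ.2, hx, hy⟩).trans
      (hu (lineF x y h).1 ⟨(lineF x y h).2, hlineF x y h⟩).symm)
  refine Nonempty.intro
    { exists_point := fun ℓ => ?_
      exists_line := fun p => ?_
      eq_or_eq := fun {p₁ p₂ l₁ l₂} h1 h2 h3 h4 => ?_
      mkPoint := fun {l₁ l₂} h =>
        (hL.exists_unique_point l₁.1 l₁.2 l₂.1 l₂.2 (fun e => h (Subtype.ext e))).exists.choose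
      mkPoint_ax := fun {l₁ l₂} h =>
        (hL.exists_unique_point l₁.1 l₁.2 l₂.1 l₂.2 (fun e => h (Subtype.ext e))).exists.choose_spec
      mkLine := fun {p₁ p₂} h => lineF p₁ p₂ h
      mkLine_ax := fun {p₁ p₂} h => hlineF p₁ p₂ h
      exists_config := ?_ }
  · -- exists_point
    by_cases ha : a ∈ ℓ.1
    · by_cases hb : b ∈ ℓ.1
      · exact ⟨c, htri ℓ a b c hab hac hbc (by simp) (by simp) (by simp) ha hb⟩
      · exact ⟨b, hb⟩
    · exact ⟨a, ha⟩
  · -- exists_line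
    by_cases h1 : p ∈ (lineF a b hab).1
    · by_cases h2 : p ∈ (lineF c d hcd).1
      · by_cases h3 : p ∈ (lineF a c hac).1
        · by_cases h4 : p ∈ (lineF b d hbd).1
          · exfalso
            have hne1 : lineF a b hab ≠ lineF a c hac := by
              intro e
              exact htri (lineF a c hac) a c b hac hab hbc.symm (by simp) (by simp) (by simp)
                (hlineF a c hac).1 (hlineF a c hac).2 (e ▸ (hlineF a b hab).2)
            have hpa : p = a := ptU _ _ hne1 p a h1 h3 (hlineF a b hab).1 (hlineF a c hac).1
            have hne2 : lineF c d hcd ≠ lineF b d hbd := by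
              intro e
              exact htri (lineF b d hbd) b d c hbd hbc hcd.symm (by simp) (by simp) (by simp)
                (hlineF b d hbd).1 (hlineF b d hbd).2 (e ▸ (hlineF c d hcd).1)
            have hpd : p = d := ptU _ _ hne2 p d h2 h4 (hlineF c d hcd).2 (hlineF b d hbd).2
            exact had (hpa ▸ hpd)
          · exact ⟨lineF b d hbd, h4⟩
        · exact ⟨lineF a c hac, h3⟩
      · exact ⟨lineF c d hcd, h2⟩
    · exact ⟨lineF a b hab, h1⟩
  · -- eq_or_eq
    by_cases hpp : p₁ = p₂
    · exact Or.inl hpp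
    · exact Or.inr ((lineU p₁ p₂ hpp l₁ h1 h2).trans (lineU p₁ p₂ hpp l₂ h3 h4).symm)
  · -- exists_config
    refine ⟨a, b, c, lineF a d had, lineF b c hbc, lineF b d hbd, ?_, ?_, ?_, ?_, ?_, ?_, ?_, ?_⟩
    · exact htri _ b c a hbc hab.symm hac.symm (by simp) (by simp) (by simp)
        (hlineF b c hbc).1 (hlineF b c hbc).2
    · exact htri _ b d a hbd hab.symm had.symm (by simp) (by simp) (by simp)
        (hlineF b d hbd).1 (hlineF b d hbd).2
    · exact htri _ a d b had hab hbd.symm (by simp) (by simp) (by simp)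
        (hlineF a d had).1 (hlineF a d had).2
    · exact (hlineF b c hbc).1
    · exact (hlineF b d hbd).1
    · exact htri _ a d c had hac hcd.symm (by simp) (by simp) (by simp)
        (hlineF a d had).1 (hlineF a d had).2
    · exact (hlineF b c hbc).2
    · exact htri _ b d c hbd hbc hcd.symm (by simp) (by simp) (by simp)
        (hlineF b d hbd).1 (hlineF b d hbd).2

noncomputable def ppOf (hL : IsProjectivePlane q L) :
    Configuration.ProjectivePlane P {m // m ∈ L} := (ppOf' hL).some

theorem plane_counts (hL : IsProjectivePlane q L) :
    Fintype.card P = q ^ 2 + q + 1 ∧ L.card = q ^ 2 + q + 1 ∧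
      (∀ p : P, (Finset.univ.filter fun ℓ : {m // m ∈ L} => p ∈ ℓ.1).card = q + 1) := by
  letI := ppOf hL
  -- some line exists
  obtain ⟨a, b, c, d, hab, -⟩ := hL.nondeg
  obtain ⟨ℓ₀m, ⟨hℓ₀, -, -⟩, -⟩ := hL.exists_unique_line a b hab
  set ℓ₀ : {m // m ∈ L} := ⟨ℓ₀m, hℓ₀⟩
  have hpc : Configuration.pointCount P ℓ₀ = q + 1 := by
    have h1 : Nat.card {p : P // p ∈ ℓ₀m} = ℓ₀m.card := by
      rw [Nat.card_eq_fintype_card]; exact Fintype.card_coe ℓ₀m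
    have h2 : Configuration.pointCount P ℓ₀ = ℓ₀m.card := h1
    rw [h2, hL.card_line ℓ₀m hℓ₀]
  have hord : Configuration.ProjectivePlane.order P {m // m ∈ L} = q := by
    have h := Configuration.ProjectivePlane.pointCount_eq P ℓ₀
    omega
  refine ⟨?_, ?_, ?_⟩
  · have := Configuration.ProjectivePlane.card_points P {m // m ∈ L}
    rw [hord] at this; exact this
  · have := Configuration.ProjectivePlane.card_lines P {m // m ∈ L}
    rw [hord] at this
    rw [← this, ← Fintype.card_coe]
  · intro p
    have h0 := Configuration.ProjectivePlane.lineCount_eq (L := {m // m ∈ L}) p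
    rw [hord, Configuration.lineCount] at h0
    have h2 : Nat.card {l : {m // m ∈ L} // p ∈ l.1} =
        (Finset.univ.filter fun ℓ : {m // m ∈ L} => p ∈ ℓ.1).card := by
      rw [Nat.card_eq_fintype_card]; exact Fintype.card_subtype _
    exact h2.symm.trans h0

theorem pair_filter (hL : IsProjectivePlane q L) (p p' : P) (h : p ≠ p') :
    (Finset.univ.filter fun ℓ : {m // m ∈ L} => p ∈ ℓ.1 ∧ p' ∈ ℓ.1).card = 1 := by
  obtain ⟨ℓ₀, ⟨h1, h2, h3⟩, hu⟩ := hL.exists_unique_line p p' h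
  rw [Finset.card_eq_one]
  refine ⟨⟨ℓ₀, h1⟩, ?_⟩
  ext ℓ
  simp only [Finset.mem_filter, Finset.mem_univ, true_and, Finset.mem_singleton]
  constructor
  · rintro ⟨ha, hb⟩
    exact Subtype.ext (hu ℓ.1 ⟨ℓ.2, ha, hb⟩)
  · rintro rfl
    exact ⟨h2, h3⟩

end Aux

open Matrix

/-- For `q ≥ 2` odd, `t ≥ 1` pairwise disjoint projective bundles
`B₁, …, B_t` in a finite projective plane of order `q` with line set `L`, the `F₂`-rank of
the concatenated incidence matrix `H = (A | M₁ | ⋯ | M_t)` equals `q² + q`; equivalently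
its right kernel has `F₂`-dimension `t(q² + q + 1) + 1`. -/
theorem statement_18 (q : ℕ) (hq : 2 ≤ q) (hodd : Odd q) (P : Type) [Fintype P] [DecidableEq P]
    (L : Finset (Finset P)) (hL : IsProjectivePlane q L)
    (t : ℕ) (ht : 1 ≤ t) (B : Fin t → Finset (Finset P))
    (hB : ∀ i, IsProjectiveBundle q L (B i))
    (hdisj : ∀ i j, i ≠ j → Disjoint (B i) (B j)) :
    let H : Matrix P ({m // m ∈ L} ⊕ ((i : Fin t) × {o // o ∈ B i})) (ZMod 2) :=
      Matrix.of fun p c =>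
        Sum.elim (fun m : {m // m ∈ L} => if p ∈ m.1 then (1 : ZMod 2) else 0)
          (fun io : (i : Fin t) × {o // o ∈ B i} => if p ∈ io.2.1 then 1 else 0) c
    H.rank = q ^ 2 + q ∧
    Module.finrank (ZMod 2) ↥(LinearMap.ker H.mulVecLin) = t * (q ^ 2 + q + 1) + 1 := by
  intro H
  classical
  obtain ⟨hcardP, hcardL, hlinecount⟩ := plane_counts hL
  have h2z : (2 : ZMod 2) = 0 := by decide
  have hq1 : ((q + 1 : ℕ) : ZMod 2) = 0 := by
    rw [ZMod.natCast_eq_zero_iff]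
    obtain ⟨k, rfl⟩ := hodd; omega
  have hq2 : ((q ^ 2 + q : ℕ) : ZMod 2) = 0 := by
    rw [ZMod.natCast_eq_zero_iff]
    obtain ⟨k, rfl⟩ := hodd; ring_nf; omega
  have hn1 : ((q ^ 2 + q + 1 : ℕ) : ZMod 2) = 1 := by
    rw [Nat.cast_add, hq2, Nat.cast_one, zero_add]
  have hP1 : ((Fintype.card P : ℕ) : ZMod 2) = 1 := by rw [hcardP]; exact hn1
  have hPpos : Nonempty P := Fintype.card_pos_iff.mp (by omega)
  set A : Matrix P {m // m ∈ L} (ZMod 2) :=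
    Matrix.of fun p ℓ => if p ∈ ℓ.1 then 1 else 0 with hA
  set N : Matrix ({m // m ∈ L} ⊕ ((i : Fin t) × {o // o ∈ B i})) {m // m ∈ L} (ZMod 2) :=
    Matrix.of fun c ℓ => if c = Sum.inl ℓ then 1 else 0 with hNdef
  have hHN : H * N = A := by
    ext p ℓ
    rw [Matrix.mul_apply]
    rw [Fintype.sum_eq_single (Sum.inl ℓ) (by
      intro c hc
      simp only [N, Matrix.of_apply, if_neg hc, mul_zero])]
    simp [H, N, A]
  have hAAT : A * Aᵀ = 1 + Matrix.of (fun _ _ => (1 : ZMod 2)) := by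
    ext p p'
    rw [Matrix.mul_apply]
    have hterm : ∀ ℓ : {m // m ∈ L}, A p ℓ * Aᵀ ℓ p' =
        if p ∈ ℓ.1 ∧ p' ∈ ℓ.1 then (1 : ZMod 2) else 0 := by
      intro ℓ
      by_cases h1 : p ∈ ℓ.1 <;> by_cases h2 : p' ∈ ℓ.1 <;>
        simp [A, Matrix.transpose_apply, h1, h2]
    rw [Finset.sum_congr rfl fun ℓ _ => hterm ℓ, Finset.sum_boole]
    by_cases hpp : p = p'
    · subst hpp
      simp only [and_self]
      rw [hlinecount p, hq1]
      simp only [Matrix.add_apply, Matrix.one_apply_eq, Matrix.of_apply]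
      decide
    · rw [pair_filter hL p p' hpp]
      simp [Matrix.one_apply_ne hpp]
  -- kernel of K is the span of the all-ones vector
  have hmv : ∀ (x : P → ZMod 2) (p : P), (A * Aᵀ).mulVec x p = x p + ∑ p', x p' := by
    intro x p
    rw [hAAT, Matrix.add_mulVec, Matrix.one_mulVec]
    simp [Matrix.mulVec, dotProduct]
  have hone : (A * Aᵀ).mulVec (fun _ => (1 : ZMod 2)) = 0 := by
    funext p
    rw [hmv]
    simp only [Finset.sum_const, Finset.card_univ, nsmul_eq_mul, mul_one]
    rw [hP1]
    exact h2z
  have hkerK : LinearMap.ker (A * Aᵀ).mulVecLin =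
      Submodule.span (ZMod 2) {(fun _ => (1 : ZMod 2) : P → ZMod 2)} := by
    apply le_antisymm
    · intro x hx
      rw [LinearMap.mem_ker, Matrix.mulVecLin_apply] at hx
      have hx' : ∀ p, x p = ∑ p', x p' := by
        intro p
        have h0 := congrFun hx p
        rw [hmv] at h0
        have := eq_neg_of_add_eq_zero_left h0
        rwa [CharTwo.neg_eq] at this
      rw [Submodule.mem_span_singleton]
      exact ⟨∑ p', x p', by funext p; simp [hx' p]⟩
    · rw [Submodule.span_le, Set.singleton_subset_iff]
      rw [SetLike.mem_coe, LinearMap.mem_ker, Matrix.mulVecLin_apply]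
      exact hone
  have hvne : (fun _ => (1 : ZMod 2) : P → ZMod 2) ≠ 0 := by
    intro h
    have := congrFun h (Classical.arbitrary P)
    simp at this
  have hrankK : (A * Aᵀ).rank = q ^ 2 + q := by
    have hrn := LinearMap.finrank_range_add_finrank_ker (A * Aᵀ).mulVecLin
    rw [hkerK, finrank_span_singleton hvne, Module.finrank_pi, hcardP] at hrn
    have : (A * Aᵀ).rank = Module.finrank (ZMod 2) (LinearMap.range (A * Aᵀ).mulVecLin) := rfl
    omega
  have hlow : q ^ 2 + q ≤ H.rank := by
    have hfac : H * (N * Aᵀ) = A * Aᵀ := by rw [← Matrix.mul_assoc, hHN]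
    have := Matrix.rank_mul_le_left H (N * Aᵀ)
    rw [hfac, hrankK] at this
    exact this
  -- sum functional
  set f : (P → ZMod 2) →ₗ[ZMod 2] ZMod 2 :=
    { toFun := fun x => ∑ p, x p
      map_add' := by intros x y; simp [Finset.sum_add_distrib]
      map_smul' := by intros c x; simp [Finset.mul_sum] } with hf
  have hfne : LinearMap.ker f ≠ ⊤ := by
    intro h
    have h1 : (fun _ => (1 : ZMod 2) : P → ZMod 2) ∈ LinearMap.ker f := h ▸ Submodule.mem_top
    rw [LinearMap.mem_ker] at h1
    have : f (fun _ => (1 : ZMod 2)) = 1 := by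
      simp only [hf, LinearMap.coe_mk, AddHom.coe_mk]
      rw [Finset.sum_const, Finset.card_univ, nsmul_eq_mul, mul_one, hP1]
    rw [h1] at this
    exact one_ne_zero this.symm
  have hcol : ∀ c, ∑ p, Hᵀ c p = (0 : ZMod 2) := by
    intro c
    cases c with
    | inl ℓ =>
      have : ∀ p, Hᵀ (Sum.inl ℓ) p = if p ∈ ℓ.1 then (1 : ZMod 2) else 0 := fun p => rfl
      rw [Finset.sum_congr rfl fun p _ => this p, Finset.sum_boole]
      rw [show (Finset.univ.filter fun p => p ∈ ℓ.1) = ℓ.1 from by ext p; simp]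
      rw [hL.card_line ℓ.1 ℓ.2]
      exact hq1
    | inr io =>
      have : ∀ p, Hᵀ (Sum.inr io) p = if p ∈ io.2.1 then (1 : ZMod 2) else 0 := fun p => rfl
      rw [Finset.sum_congr rfl fun p _ => this p, Finset.sum_boole]
      rw [show (Finset.univ.filter fun p => p ∈ io.2.1) = io.2.1 from by ext p; simp]
      rw [((hB io.1).2.1 io.2.1 io.2.2).1]
      exact hq1
  have hrange : LinearMap.range H.mulVecLin ≤ LinearMap.ker f := by
    rw [Matrix.range_mulVecLin, Submodule.span_le]
    rintro - ⟨c, rfl⟩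
    rw [SetLike.mem_coe, LinearMap.mem_ker]
    exact hcol c
  have hupper : H.rank ≤ q ^ 2 + q := by
    have h1 : H.rank ≤ Module.finrank (ZMod 2) (LinearMap.ker f) :=
      Submodule.finrank_mono hrange
    have h2 : Module.finrank (ZMod 2) (LinearMap.ker f) <
        Module.finrank (ZMod 2) (P → ZMod 2) :=
      Submodule.finrank_lt hfne
    rw [Module.finrank_pi, hcardP] at h2
    omega
  have hrankH : H.rank = q ^ 2 + q := le_antisymm hupper hlow
  refine ⟨hrankH, ?_⟩
  have hrn := LinearMap.finrank_range_add_finrank_ker H.mulVecLin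
  have hcards : Module.finrank (ZMod 2)
      (({m // m ∈ L} ⊕ ((i : Fin t) × {o // o ∈ B i})) → ZMod 2) =
      (q ^ 2 + q + 1) + t * (q ^ 2 + q + 1) := by
    rw [Module.finrank_pi, Fintype.card_sum, Fintype.card_sigma, Fintype.card_coe, hcardL]
    congr 1
    rw [Finset.sum_congr rfl fun i _ => (Fintype.card_coe (B i)).trans (hB i).1]
    simp [Finset.sum_const, mul_comm]
  rw [hcards] at hrn
  have hr : Module.finrank (ZMod 2) (LinearMap.range H.mulVecLin) = q ^ 2 + q := hrankH
  omega
end
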